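/- arXiv:1506.04059 — 5 statements merged into one kernel-verified Lean document; each statement's English description precedes it below -/
import Mathlib

section
/- Let σ be a monoid endomorphism of the free monoid X* over a finite set X of variables (a substitution), and suppose there is a constant k such that for every i ≥ 1 and every X ∈ X, the word σ^i(X) has length at most k·|X| (σ is k-bounded under iteration). Define a relation ⋖ on X by X ⋖ Y iff there exists i ≥ 1 such that X occurs in σ^i(Y). Then ⋖ is antisymmetric on distinct variables: for distinct X, Y, if X ⋖ Y then not Y ⋖ X, provided additionally that the monoid generated by σ under composition is aperiodic. -/
/-- Number of occurrences of the variable `x` in a word of the free monoid. -/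
def occFM {V : Type*} [DecidableEq V] (w : FreeMonoid V) (x : V) : ℕ :=
  (FreeMonoid.toList w).count x

/-- `x ⋖ y`: the variable `x` flows into `y`, i.e. `x` occurs in `σ^i(y)` for
some `i ≥ 1`. -/
def FlowsInto {V : Type*} [DecidableEq V] (σ : Monoid.End (FreeMonoid V))
    (x y : V) : Prop :=
  ∃ i ≥ 1, 0 < occFM ((σ ^ i) (FreeMonoid.of y)) x

lemma occFM_mul {V : Type*} [DecidableEq V] (u v : FreeMonoid V) (x : V) :
    occFM (u * v) x = occFM u x + occFM v x := by
  simp [occFM, FreeMonoid.toList_mul, List.count_append]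

lemma occFM_hom_list {V : Type*} [DecidableEq V] (φ : Monoid.End (FreeMonoid V))
    (l : List V) (x : V) :
    occFM (φ (FreeMonoid.ofList l)) x
      = (l.map (fun z => occFM (φ (FreeMonoid.of z)) x)).sum := by
  induction l with
  | nil =>
      have : FreeMonoid.ofList ([] : List V) = 1 := rfl
      simp [this, occFM]
  | cons z l ih =>
      have h : FreeMonoid.ofList (z :: l) = FreeMonoid.of z * FreeMonoid.ofList l := rfl
      rw [h, map_mul, occFM_mul, ih]
      simp

lemma occFM_key {V : Type*} [Fintype V] [DecidableEq V] (σ : Monoid.End (FreeMonoid V))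
    (m l : ℕ) (x y : V) :
    occFM ((σ ^ (m + l)) (FreeMonoid.of y)) x
      = ∑ z : V, occFM ((σ ^ l) (FreeMonoid.of y)) z * occFM ((σ ^ m) (FreeMonoid.of z)) x := by
  have h1 : (σ ^ (m + l)) (FreeMonoid.of y) = (σ ^ m) ((σ ^ l) (FreeMonoid.of y)) := by
    rw [pow_add]; rfl
  rw [h1]
  set w := (σ ^ l) (FreeMonoid.of y) with hw
  have h2 : w = FreeMonoid.ofList (FreeMonoid.toList w) := rfl
  rw [h2, occFM_hom_list, Finset.sum_list_map_count]
  rw [Finset.sum_subset (Finset.subset_univ _)]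
  · apply Finset.sum_congr rfl
    intro z _
    simp [occFM, smul_eq_mul]
  · intro z _ hz
    simp only [List.mem_toFinset] at hz
    simp [List.count_eq_zero_of_not_mem hz]


/-- Let `σ` be a substitution (an endomorphism of the free monoid over a finite
variable set `V`) that is `k`-bounded under iteration, and whose generated
monoid is aperiodic in the sense that the occurrence-count matrices of `σ^n`
and `σ^(n+1)` agree for some `n`. Then the flow relation `⋖` is antisymmetric
on distinct variables: for distinct `x, y`, if `x ⋖ y` then not `y ⋖ x`. -/
theorem flow_antisymm {V : Type*} [Fintype V] [DecidableEq V]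
    (σ : Monoid.End (FreeMonoid V)) (k : ℕ)
    (hbound : ∀ i ≥ 1, ∀ x y : V, occFM ((σ ^ i) (FreeMonoid.of y)) x ≤ k)
    (haper : ∃ n : ℕ, ∀ x y : V,
      occFM ((σ ^ n) (FreeMonoid.of y)) x = occFM ((σ ^ (n + 1)) (FreeMonoid.of y)) x) :
    ∀ x y : V, x ≠ y → FlowsInto σ x y → ¬ FlowsInto σ y x := by
  obtain ⟨n, hn⟩ := haper
  set a : ℕ → V → V → ℕ := fun m x y => occFM ((σ ^ m) (FreeMonoid.of y)) x with ha
  have key : ∀ m l (x y : V), a (m + l) x y = ∑ z : V, a l z y * a m x z :=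
    fun m l x y => occFM_key σ m l x y
  -- stabilization
  have hshift : ∀ m (x y : V), a (n + m) x y = a n x y := by
    intro m
    induction m with
    | zero => intro x y; rfl
    | succ m ih =>
        intro x y
        have e : n + (m + 1) = (n + m) + 1 := by ring
        rw [e, key (n + m) 1 x y]
        have : ∑ z : V, a 1 z y * a (n + m) x z = ∑ z : V, a 1 z y * a n x z :=
          Finset.sum_congr rfl (fun z _ => by rw [ih x z])
        rw [this, ← key n 1 x y]
        exact (hn x y).symm
  have habs : ∀ m (x y : V), n ≤ m → a m x y = a n x y := by
    intro m x y hm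
    obtain ⟨c, rfl⟩ := Nat.exists_eq_add_of_le hm
    exact hshift c x y
  -- single-term lower bound for key
  have hterm : ∀ m l (x y z : V), a l z y * a m x z ≤ a (m + l) x y := by
    intro m l x y z
    rw [key]
    exact Finset.single_le_sum (f := fun z => a l z y * a m x z)
      (fun _ _ => Nat.zero_le _) (Finset.mem_univ z)
  intro x y hxy ⟨i, hi, hix⟩ ⟨j, hj, hjy⟩
  replace hix : 0 < a i x y := hix
  replace hjy : 0 < a j y x := hjy
  set p := i + j with hp
  have hp1 : 1 ≤ p := by omega
  have hpxx : 0 < a p x x := by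
    have := hterm i j x x y
    rw [← hp] at this
    have h : 0 < a j y x * a i x y := Nat.mul_pos hjy hix
    omega
  have hpyy : 0 < a p y y := by
    have := hterm j i y y x
    have h : 0 < a i x y * a j y x := Nat.mul_pos hix hjy
    have e : j + i = p := by rw [hp]; ring
    rw [e] at this
    omega
  -- propagate positivity
  have hprop : ∀ m (u w : V), 0 < a p w w → 0 < a m u w → 0 < a (m + p) u w := by
    intro m u w h1 h2
    have := hterm m p u w w
    have h : 0 < a p w w * a m u w := Nat.mul_pos h1 h2
    omega
  have hxyT : ∀ t, 0 < a (i + t * p) x y := by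
    intro t
    induction t with
    | zero => simpa using hix
    | succ t ih =>
        have e : i + (t + 1) * p = (i + t * p) + p := by ring
        rw [e]; exact hprop _ x y hpyy ih
  have hxxT : ∀ t, 0 < a (p + t * p) x x := by
    intro t
    induction t with
    | zero => simpa using hpxx
    | succ t ih =>
        have e : p + (t + 1) * p = (p + t * p) + p := by ring
        rw [e]; exact hprop _ x x hpxx ih
  have hyyT : ∀ t, 0 < a (p + t * p) y y := by
    intro t
    induction t with
    | zero => simpa using hpyy
    | succ t ih =>
        have e : p + (t + 1) * p = (p + t * p) + p := by ring
        rw [e]; exact hprop _ y y hpyy ih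
  have hnp : n ≤ n * p := Nat.le_mul_of_pos_right n (by omega)
  have hBxy : 0 < a n x y := by
    have := hxyT n
    rwa [habs (i + n * p) x y (by omega)] at this
  have hBxx : 0 < a n x x := by
    have := hxxT n
    rwa [habs (p + n * p) x x (by omega)] at this
  have hByy : 0 < a n y y := by
    have := hyyT n
    rwa [habs (p + n * p) y y (by omega)] at this
  -- idempotency contradiction
  have hsum : ∑ z : V, a n z y * a n x z = a n x y := by
    rw [← key n n x y]
    exact habs (n + n) x y (by omega)
  have hpair : a n x y * a n x x + a n y y * a n x y ≤ ∑ z : V, a n z y * a n x z := by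
    have hsub : ({x, y} : Finset V) ⊆ Finset.univ := Finset.subset_univ _
    calc a n x y * a n x x + a n y y * a n x y
        = ∑ z ∈ ({x, y} : Finset V), a n z y * a n x z := by
          rw [Finset.sum_pair hxy]
      _ ≤ ∑ z : V, a n z y * a n x z :=
          Finset.sum_le_sum_of_subset hsub
  have h1 : a n x y ≤ a n x y * a n x x := Nat.le_mul_of_pos_right _ hBxx
  have h2 : a n x y ≤ a n y y * a n x y := Nat.le_mul_of_pos_left _ hByy
  omega
end

section
/- Let σ be an endomorphism of the free monoid X* over a finite variable set X of size ℓ, such that all iterates σ^i are k-linear (every variable occurs at most k times in σ^i(Y) for each Y), and suppose the occurrence-count matrices of σ satisfy M(σ)^n = M(σ)^(n+1). If X occurs in σ(X) and σ(X) ≠ X, i.e., some variable Y ≠ X occurs in σ(X), then σ^(kℓ)(Y) = ε (the empty word). -/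
open FreeMonoid

lemma hom_len {V : Type*} (F : Monoid.End (FreeMonoid V)) (l : List V) :
    (F (ofList l)).length = (l.map (fun a => (F (of a)).length)).sum := by
  induction l with
  | nil =>
      have : ofList ([] : List V) = 1 := rfl
      simp [this]
  | cons a t ih => rw [ofList_cons, map_mul, length_mul, List.map_cons, List.sum_cons, ih]

lemma sum_ge_two {V : Type*} [DecidableEq V] (l : List V) (g : V → ℕ) (x y : V)
    (hxy : y ≠ x) (hx : 0 < l.count x) (hy : 0 < l.count y) :
    g x + g y ≤ (l.map g).sum := by
  rw [Finset.sum_list_map_count]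
  have hsub : ({x, y} : Finset V) ⊆ l.toFinset := by
    intro a ha
    simp only [Finset.mem_insert, Finset.mem_singleton] at ha
    rcases ha with rfl | rfl <;> simp only [List.mem_toFinset]
    exacts [List.count_pos_iff.mp hx, List.count_pos_iff.mp hy]
  calc g x + g y ≤ l.count x • g x + l.count y • g y := by
        simp only [smul_eq_mul]
        exact Nat.add_le_add (Nat.le_mul_of_pos_left _ hx) (Nat.le_mul_of_pos_left _ hy)
    _ = ∑ m ∈ ({x, y} : Finset V), l.count m • g m := by
        rw [Finset.sum_insert (by simp [Ne.symm hxy] : x ∉ ({y} : Finset V)), Finset.sum_singleton]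
    _ ≤ ∑ m ∈ l.toFinset, l.count m • g m :=
        Finset.sum_le_sum_of_subset hsub

lemma len_le {V : Type*} [Fintype V] [DecidableEq V] (w : FreeMonoid V) (k : ℕ)
    (h : ∀ z : V, (toList w).count z ≤ k) : w.length ≤ k * Fintype.card V := by
  calc w.length = ∑ z ∈ (toList w).toFinset, (toList w).count z :=
      (List.sum_toFinset_count_eq_length _).symm
    _ ≤ ∑ z ∈ (toList w).toFinset, k := Finset.sum_le_sum (fun z _ => h z)
    _ = (toList w).toFinset.card * k := by rw [Finset.sum_const, smul_eq_mul]
    _ ≤ Fintype.card V * k := by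
        gcongr; exact Finset.card_le_card (Finset.subset_univ _)
    _ = k * Fintype.card V := Nat.mul_comm _ _

/-- Let `σ` be an endomorphism of the free monoid over a finite variable set `V`
of size `ℓ`, whose iterates are all `k`-linear, and whose occurrence-count
matrix `M` satisfies `M ^ n = M ^ (n+1)`. If `x` occurs in `σ(x)` together with
another variable `y ≠ x`, then `σ^(k·ℓ)(y)` is the empty word. -/
theorem copies_die_out {V : Type*} [Fintype V] [DecidableEq V]
    (σ : Monoid.End (FreeMonoid V)) (k n : ℕ)
    (hbound : ∀ i ≥ 1, ∀ x y : V, occFM ((σ ^ i) (FreeMonoid.of y)) x ≤ k)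
    (M : Matrix V V ℕ)
    (hM : ∀ x y : V, M x y = occFM (σ (FreeMonoid.of y)) x)
    (haper : M ^ n = M ^ (n + 1))
    (x y : V) (hxy : y ≠ x)
    (hx : 0 < occFM (σ (FreeMonoid.of x)) x)
    (hy : 0 < occFM (σ (FreeMonoid.of x)) y) :
    (σ ^ (k * Fintype.card V)) (FreeMonoid.of y) = 1 := by
  set m := k * Fintype.card V with hm
  by_contra hne
  -- every iterate up to m is nonempty
  have hnonempty : ∀ i ≤ m, 1 ≤ ((σ ^ i) (of y)).length := by
    intro i hi
    by_contra h
    push_neg at h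
    have h0 : (σ ^ i) (of y) = 1 := length_eq_zero.mp (Nat.lt_one_iff.mp h)
    have : (σ ^ m) (of y) = 1 := by
      have : σ ^ m = σ ^ (m - i) * σ ^ i := by
        rw [← pow_add]; congr 1; omega
      rw [this]
      show (σ ^ (m - i)) ((σ ^ i) (of y)) = 1
      rw [h0, map_one]
    exact hne this
  -- growth
  have hgrow : ∀ i, ((σ ^ i) (of x)).length + ((σ ^ i) (of y)).length
      ≤ ((σ ^ (i + 1)) (of x)).length := by
    intro i
    have hstep : (σ ^ (i + 1)) (of x) = (σ ^ i) (σ (of x)) := by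
      rw [pow_succ]; rfl
    set l : List V := toList (σ (of x)) with hl
    have holl : ofList l = σ (of x) := rfl
    calc ((σ ^ i) (of x)).length + ((σ ^ i) (of y)).length
        ≤ (l.map (fun a => ((σ ^ i) (of a)).length)).sum :=
          sum_ge_two l (fun a => ((σ ^ i) (of a)).length) x y hxy hx hy
      _ = ((σ ^ i) (ofList l)).length := (hom_len _ _).symm
      _ = ((σ ^ (i + 1)) (of x)).length := by rw [holl, hstep]
  -- lower bound by induction
  have hlow : ∀ i ≤ m + 1, i + 1 ≤ ((σ ^ i) (of x)).length := by
    intro i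
    induction i with
    | zero => intro _; simp [length_of]
    | succ j ih =>
        intro hj
        have h1 := ih (by omega)
        have h2 := hnonempty j (by omega)
        have h3 := hgrow j
        omega
  have hub : ((σ ^ (m + 1)) (of x)).length ≤ m := by
    rw [hm]
    exact len_le _ k (fun z => hbound (m + 1) (by omega) z x)
  have := hlow (m + 1) le_rfl
  omega
end

section
/- Let σ be an endomorphism of the free monoid X* (ℓ = |X|) that is k-bounded under iteration, and suppose its occurrence-count matrix M(σ) satisfies M(σ)^n = M(σ)^(n+1). Then σ itself stabilizes: σ^((k+1)ℓ) = σ^((k+1)ℓ+1) as maps on X*. -/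
set_option linter.unusedSectionVars false
namespace SubStab

open FreeMonoid Finset

variable {V : Type*} [Fintype V] [DecidableEq V]

/-- `i`-th iterate image of the letter `y`. -/
def W (σ : Monoid.End (FreeMonoid V)) (i : ℕ) (y : V) : FreeMonoid V :=
  (σ ^ i) (FreeMonoid.of y)

/-- Occurrence count of `x` in `σ^i(y)`. -/
def cnt (σ : Monoid.End (FreeMonoid V)) (i : ℕ) (x y : V) : ℕ :=
  occFM (W σ i y) x

lemma occ_one (x : V) : occFM (1 : FreeMonoid V) x = 0 := rfl

lemma occ_mul (u v : FreeMonoid V) (x : V) :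
    occFM (u * v) x = occFM u x + occFM v x := by
  simp [occFM, FreeMonoid.toList_mul]

lemma occ_of (z x : V) : occFM (FreeMonoid.of z) x = if z = x then 1 else 0 := by
  simp only [occFM, FreeMonoid.toList_of]
  by_cases h : z = x <;> simp [h, List.count_singleton]

lemma occ_pos_iff (w : FreeMonoid V) (x : V) :
    x ∈ FreeMonoid.toList w ↔ 1 ≤ occFM w x := by
  rw [occFM, Nat.one_le_iff_ne_zero, Ne, List.count_eq_zero]
  tauto

lemma eq_one_iff (w : FreeMonoid V) : w = 1 ↔ ∀ x, occFM w x = 0 := by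
  constructor
  · rintro rfl x; exact occ_one x
  · intro h
    rcases hl : FreeMonoid.toList w with _ | ⟨a, l⟩
    · have : FreeMonoid.toList w = FreeMonoid.toList 1 := by simp [hl, FreeMonoid.toList_one]
      exact FreeMonoid.toList.injective this
    · exfalso
      have : a ∈ FreeMonoid.toList w := by rw [hl]; exact List.mem_cons_self
      rw [occ_pos_iff] at this
      have := h a
      omega

lemma occ_hom (φ : FreeMonoid V →* FreeMonoid V) (w : FreeMonoid V) (x : V) :
    occFM (φ w) x = ∑ z, occFM w z * occFM (φ (FreeMonoid.of z)) x := by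
  induction w using FreeMonoid.inductionOn' with
  | one => simp [occ_one]
  | of_mul h t ih =>
    rw [map_mul, occ_mul, ih]
    have : ∀ z : V, occFM (FreeMonoid.of h * t) z = (if h = z then 1 else 0) + occFM t z := by
      intro z; rw [occ_mul, occ_of]
    simp only [this, add_mul]
    rw [Finset.sum_add_distrib]
    congr 1
    simp [ite_mul]

lemma W_zero (σ : Monoid.End (FreeMonoid V)) (y : V) : W σ 0 y = FreeMonoid.of y := by
  simp [W]

lemma W_one (σ : Monoid.End (FreeMonoid V)) (y : V) : W σ 1 y = σ (FreeMonoid.of y) := by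
  simp [W]

lemma W_add (σ : Monoid.End (FreeMonoid V)) (a b : ℕ) (y : V) :
    W σ (a + b) y = (σ ^ a) (W σ b y) := by
  simp [W, pow_add, Monoid.End.coe_mul]

lemma W_succ (σ : Monoid.End (FreeMonoid V)) (j : ℕ) (y : V) :
    W σ (j + 1) y = (σ ^ j) (σ (FreeMonoid.of y)) := by
  simpa [W_one] using W_add σ j 1 y

lemma cnt_def (σ : Monoid.End (FreeMonoid V)) (i : ℕ) (x y : V) :
    cnt σ i x y = occFM (W σ i y) x := rfl

lemma cnt_zero (σ : Monoid.End (FreeMonoid V)) (x y : V) :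
    cnt σ 0 x y = if y = x then 1 else 0 := by
  rw [cnt, W_zero, occ_of]

lemma cnt_add (σ : Monoid.End (FreeMonoid V)) (a b : ℕ) (x y : V) :
    cnt σ (a + b) x y = ∑ z, cnt σ b z y * cnt σ a x z := by
  rw [cnt, W_add]
  exact occ_hom (σ ^ a) (W σ b y) x

lemma cnt_comp_ge (σ : Monoid.End (FreeMonoid V)) (a b : ℕ) (x z y : V) :
    cnt σ b z y * cnt σ a x z ≤ cnt σ (a + b) x y := by
  rw [cnt_add]
  exact Finset.single_le_sum (f := fun t => cnt σ b t y * cnt σ a x t)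
    (fun _ _ => Nat.zero_le _) (Finset.mem_univ z)

lemma matrix_pow (σ : Monoid.End (FreeMonoid V)) (M : Matrix V V ℕ)
    (hM : ∀ x y : V, M x y = occFM (σ (FreeMonoid.of y)) x) :
    ∀ i (x y : V), (M ^ i) x y = cnt σ i x y := by
  intro i
  induction i with
  | zero =>
    intro x y
    rw [pow_zero, cnt_zero, Matrix.one_apply]
    by_cases h : y = x <;> simp [h]
    · intro hxy; exact absurd h (by simp [hxy])
  | succ i ih =>
    intro x y
    rw [pow_succ, cnt_add σ i 1 x y, Matrix.mul_apply]
    apply Finset.sum_congr rfl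
    intro z _
    rw [ih x z, hM z y, cnt_def σ 1 z y, W_one]
    ring

/-- a letter is mortal if some iterate of σ kills it. -/
def Mor (σ : Monoid.End (FreeMonoid V)) (z : V) : Prop := ∃ i, W σ i z = 1

lemma mor_mono (σ : Monoid.End (FreeMonoid V)) {i j : ℕ} {z : V}
    (h : W σ i z = 1) (hij : i ≤ j) : W σ j z = 1 := by
  obtain ⟨d, rfl⟩ := Nat.exists_eq_add_of_le hij
  rw [Nat.add_comm, W_add, h, map_one]

lemma mor_card (σ : Monoid.End (FreeMonoid V)) {z : V} (h : Mor σ z) :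
    W σ (Fintype.card V) z = 1 := by
  classical
  set ℓ := Fintype.card V with hℓ
  set P : ℕ → Finset V := fun i => Finset.univ.filter (fun t => W σ i t = 1) with hP
  have Pmono : ∀ i j, i ≤ j → P i ⊆ P j := by
    intro i j hij t ht
    simp only [hP, Finset.mem_filter, Finset.mem_univ, true_and] at ht ⊢
    exact mor_mono σ ht hij
  have M3 : ∀ i (t : V), t ∈ P (i + 1) ↔ ∀ u, 1 ≤ cnt σ 1 u t → u ∈ P i := by
    intro i t
    simp only [hP, Finset.mem_filter, Finset.mem_univ, true_and]
    rw [eq_one_iff]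
    constructor
    · intro h u hu
      rw [eq_one_iff]
      intro x
      have hx : cnt σ (i + 1) x t = 0 := h x
      rw [cnt_add σ i 1 x t, Finset.sum_eq_zero_iff] at hx
      have h2 := hx u (Finset.mem_univ u)
      have h0 : cnt σ i x u = 0 := by
        rcases Nat.mul_eq_zero.mp h2 with h1 | h1
        · omega
        · exact h1
      exact h0
    · intro h x
      show cnt σ (i + 1) x t = 0
      rw [cnt_add σ i 1 x t]
      apply Finset.sum_eq_zero
      intro u _
      by_cases hu : 1 ≤ cnt σ 1 u t
      · have h2 := h u hu
        rw [eq_one_iff] at h2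
        have h0 : cnt σ i x u = 0 := h2 x
        rw [h0]; ring
      · have h0 : cnt σ 1 u t = 0 := by omega
        rw [h0]; ring
  -- there is a stabilization point i0 ≤ ℓ
  have hstep : ∀ i, P i = P (i + 1) → P (i + 1) = P (i + 2) := by
    intro i hi
    apply Finset.Subset.antisymm (Pmono _ _ (by omega))
    intro t ht
    rw [M3] at ht ⊢
    intro u hu
    exact hi ▸ ht u hu
  have hex : ∃ i ≤ ℓ, P i = P (i + 1) := by
    by_contra hc
    push_neg at hc
    have hcard : ∀ i, i ≤ ℓ + 1 → i ≤ (P i).card := by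
      intro i
      induction i with
      | zero => omega
      | succ i ih =>
        intro hi
        have h1 : P i ⊂ P (i + 1) :=
          Finset.ssubset_iff_subset_ne.mpr ⟨Pmono _ _ (by omega), hc i (by omega)⟩
        have := Finset.card_lt_card h1
        have := ih (by omega)
        omega
    have h1 := hcard (ℓ + 1) le_rfl
    have h2 : (P (ℓ + 1)).card ≤ ℓ := by
      rw [hℓ]
      exact (Finset.card_le_card (Finset.subset_univ _)).trans (le_of_eq (Finset.card_univ))
    omega
  obtain ⟨i0, hi0le, hi0⟩ := hex
  have hstab : ∀ j, i0 ≤ j → P j = P i0 := by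
    intro j hj
    induction j, hj using Nat.le_induction with
    | base => rfl
    | succ j hj ih =>
      ext t
      rw [M3 j t]
      conv_rhs => rw [hi0]
      rw [M3 i0 t]
      simp only [ih]
  have hz : z ∈ P ℓ := by
    obtain ⟨m, hm⟩ := h
    have hzm : z ∈ P m := by
      simp only [hP, Finset.mem_filter, Finset.mem_univ, true_and]; exact hm
    rcases le_or_gt m ℓ with h1 | h1
    · exact Pmono _ _ h1 hzm
    · have := hstab m (by omega)
      rw [this] at hzm
      exact Pmono _ _ hi0le hzm
  simp only [hP, Finset.mem_filter, Finset.mem_univ, true_and] at hz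
  exact hz

lemma mor_desc (σ : Monoid.End (FreeMonoid V)) {z x : V} {b : ℕ}
    (h : Mor σ z) (hx : 1 ≤ cnt σ b x z) : Mor σ x := by
  obtain ⟨i, hi⟩ := h
  refine ⟨i, ?_⟩
  rw [eq_one_iff]
  intro x'
  have h1 : cnt σ (i + b) x' z = 0 := by
    have hw : W σ (i + b) z = 1 := mor_mono σ hi (by omega)
    rw [cnt_def, hw, occ_one]
  rw [cnt_add σ i b x' z, Finset.sum_eq_zero_iff] at h1
  have h2 := h1 x (Finset.mem_univ x)
  have h3 : cnt σ i x' x = 0 := by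
    rcases Nat.mul_eq_zero.mp h2 with h4 | h4
    · omega
    · exact h4
  exact h3

open Classical in
/-- The set of nonmortal letters. -/
noncomputable def nmS (σ : Monoid.End (FreeMonoid V)) : Finset V :=
  Finset.univ.filter (fun z => ¬ Mor σ z)

/-- Number of nonmortal letters in a word, with multiplicity. -/
noncomputable def nm (σ : Monoid.End (FreeMonoid V)) (w : FreeMonoid V) : ℕ :=
  ∑ x ∈ nmS σ, occFM w x

lemma mem_nmS {σ : Monoid.End (FreeMonoid V)} {z : V} : z ∈ nmS σ ↔ ¬ Mor σ z := by
  simp [nmS]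

lemma nm_of (σ : Monoid.End (FreeMonoid V)) {z : V} (h : ¬ Mor σ z) :
    nm σ (FreeMonoid.of z) = 1 := by
  have h1 : ∀ x ∈ nmS σ, occFM (FreeMonoid.of z) x = if z = x then 1 else 0 :=
    fun x _ => occ_of z x
  rw [nm, Finset.sum_congr rfl h1, Finset.sum_ite_eq]
  simp [mem_nmS.mpr h]

lemma nm_W (σ : Monoid.End (FreeMonoid V)) (i : ℕ) (y : V) :
    nm σ (W σ i y) = ∑ x ∈ nmS σ, cnt σ i x y := rfl

lemma nm_sigma_ge_one (σ : Monoid.End (FreeMonoid V)) {z : V} (h : ¬ Mor σ z) :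
    1 ≤ nm σ (W σ 1 z) := by
  by_contra hlt
  push_neg at hlt
  have h0 : ∀ x, ¬ Mor σ x → cnt σ 1 x z = 0 := by
    intro x hx
    have hmem : x ∈ nmS σ := mem_nmS.mpr hx
    have h2 : cnt σ 1 x z ≤ nm σ (W σ 1 z) :=
      Finset.single_le_sum (f := fun x => occFM (W σ 1 z) x) (fun _ _ => Nat.zero_le _) hmem
    omega
  apply h
  refine ⟨Fintype.card V + 1, ?_⟩
  rw [eq_one_iff]
  intro x'
  show cnt σ (Fintype.card V + 1) x' z = 0
  rw [cnt_add σ (Fintype.card V) 1 x' z]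
  apply Finset.sum_eq_zero
  intro u _
  by_cases hu : Mor σ u
  · have h1 : cnt σ (Fintype.card V) x' u = 0 := by
      rw [cnt_def, mor_card σ hu, occ_one]
    rw [h1]; ring
  · rw [h0 u hu]; ring

lemma nm_W_add (σ : Monoid.End (FreeMonoid V)) (a b : ℕ) (y : V) :
    nm σ (W σ (a + b) y) = ∑ z, cnt σ b z y * nm σ (W σ a z) := by
  rw [nm_W]
  have h1 : ∀ x ∈ nmS σ, cnt σ (a + b) x y = ∑ z, cnt σ b z y * cnt σ a x z :=
    fun x _ => cnt_add σ a b x y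
  rw [Finset.sum_congr rfl h1, Finset.sum_comm]
  apply Finset.sum_congr rfl
  intro z _
  rw [nm_W, Finset.mul_sum]

lemma nm_W_mono (σ : Monoid.End (FreeMonoid V)) {i j : ℕ} (y : V) (hij : i ≤ j) :
    nm σ (W σ i y) ≤ nm σ (W σ j y) := by
  induction j, hij using Nat.le_induction with
  | base => exact le_rfl
  | succ j hj ih =>
    have key : nm σ (W σ j y) ≤ nm σ (W σ (1 + j) y) := by
      rw [nm_W_add σ 1 j y]
      calc nm σ (W σ j y) = ∑ z ∈ nmS σ, cnt σ j z y := nm_W σ j y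
        _ = ∑ z ∈ nmS σ, cnt σ j z y * 1 := by simp
        _ ≤ ∑ z ∈ nmS σ, cnt σ j z y * nm σ (W σ 1 z) := by
            apply Finset.sum_le_sum
            intro z hz
            exact Nat.mul_le_mul_left _ (nm_sigma_ge_one σ (mem_nmS.mp hz))
        _ ≤ ∑ z, cnt σ j z y * nm σ (W σ 1 z) :=
            Finset.sum_le_sum_of_subset (Finset.subset_univ _)
    have e : 1 + j = j + 1 := by omega
    rw [e] at key
    exact ih.trans key

lemma nm_ge_one (σ : Monoid.End (FreeMonoid V)) {z : V} (h : ¬ Mor σ z) (i : ℕ) :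
    1 ≤ nm σ (W σ i z) := by
  have := nm_W_mono σ (i := 0) (j := i) z (Nat.zero_le _)
  rw [W_zero, nm_of σ h] at this
  exact this

lemma cnt_self_pow (σ : Monoid.End (FreeMonoid V)) {c : ℕ} {y : V}
    (h : 1 ≤ cnt σ c y y) : ∀ i, 1 ≤ cnt σ (i * c) y y := by
  intro i
  induction i with
  | zero => simp [cnt_zero]
  | succ i ih =>
    have := cnt_comp_ge σ (i * c) c y y y
    have h2 : 1 * 1 ≤ cnt σ c y y * cnt σ (i * c) y y := Nat.mul_le_mul h ih
    calc 1 = 1 * 1 := rfl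
    _ ≤ cnt σ c y y * cnt σ (i * c) y y := h2
    _ ≤ cnt σ (i * c + c) y y := this
    _ = cnt σ ((i + 1) * c) y y := by ring_nf

lemma nonmor_of_rec (σ : Monoid.End (FreeMonoid V)) {c : ℕ} {y : V}
    (hc : 1 ≤ c) (h : 1 ≤ cnt σ c y y) : ¬ Mor σ y := by
  rintro ⟨m, hm⟩
  have h1 : 1 ≤ cnt σ (m * c) y y := cnt_self_pow σ h m
  have h2 : W σ (m * c) y = 1 := mor_mono σ hm (Nat.le_mul_of_pos_right m hc)
  rw [cnt, h2, occ_one] at h1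
  omega

lemma nm_growth (σ : Monoid.End (FreeMonoid V)) {c : ℕ} {y : V}
    (hc : 1 ≤ c) (h : 1 ≤ cnt σ c y y) :
    ∀ i, i * nm σ (W σ c y) + 1 ≤ nm σ (W σ (i * c) y) + i := by
  intro i
  have hy : ¬ Mor σ y := nonmor_of_rec σ hc h
  have hymem : y ∈ nmS σ := mem_nmS.mpr hy
  induction i with
  | zero => simp [Nat.zero_mul, W_zero, nm_of σ hy]
  | succ i ih =>
    have key : nm σ (W σ (i * c) y) + nm σ (W σ c y) ≤ nm σ (W σ (i * c + c) y) + 1 := by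
      have e1 : nm σ (W σ (i * c + c) y) = ∑ z, cnt σ c z y * nm σ (W σ (i * c) z) :=
        nm_W_add σ (i * c) c y
      have e2 : ∑ z ∈ nmS σ, cnt σ c z y * nm σ (W σ (i * c) z)
          ≤ ∑ z, cnt σ c z y * nm σ (W σ (i * c) z) :=
        Finset.sum_le_sum_of_subset (Finset.subset_univ _)
      have e3 : cnt σ c y y * nm σ (W σ (i * c) y)
            + ∑ z ∈ (nmS σ).erase y, cnt σ c z y * nm σ (W σ (i * c) z)
          = ∑ z ∈ nmS σ, cnt σ c z y * nm σ (W σ (i * c) z) :=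
        Finset.add_sum_erase (nmS σ) (fun z => cnt σ c z y * nm σ (W σ (i * c) z)) hymem
      have e4 : ∑ z ∈ (nmS σ).erase y, cnt σ c z y
          ≤ ∑ z ∈ (nmS σ).erase y, cnt σ c z y * nm σ (W σ (i * c) z) := by
        apply Finset.sum_le_sum
        intro z hz
        have hz' : ¬ Mor σ z := mem_nmS.mp (Finset.mem_of_mem_erase hz)
        have hz1 := nm_ge_one σ hz' (i * c)
        calc cnt σ c z y = cnt σ c z y * 1 := by ring
          _ ≤ _ := Nat.mul_le_mul_left _ hz1
      have e5 : nm σ (W σ c y) = cnt σ c y y + ∑ z ∈ (nmS σ).erase y, cnt σ c z y := by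
        rw [nm_W]
        exact (Finset.add_sum_erase (nmS σ) (fun z => cnt σ c z y) hymem).symm
      have e6 : 1 ≤ nm σ (W σ (i * c) y) := nm_ge_one σ hy _
      have e7 : cnt σ c y y + nm σ (W σ (i * c) y)
          ≤ cnt σ c y y * nm σ (W σ (i * c) y) + 1 := by
        obtain ⟨a, ha⟩ := Nat.exists_eq_add_of_le h
        obtain ⟨b, hb⟩ := Nat.exists_eq_add_of_le e6
        rw [ha, hb]
        nlinarith
      calc nm σ (W σ (i * c) y) + nm σ (W σ c y)
          = (cnt σ c y y + nm σ (W σ (i * c) y))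
            + ∑ z ∈ (nmS σ).erase y, cnt σ c z y := by rw [e5]; ring
        _ ≤ (cnt σ c y y * nm σ (W σ (i * c) y) + 1)
            + ∑ z ∈ (nmS σ).erase y, cnt σ c z y := Nat.add_le_add_right e7 _
        _ ≤ (cnt σ c y y * nm σ (W σ (i * c) y) + 1)
            + ∑ z ∈ (nmS σ).erase y, cnt σ c z y * nm σ (W σ (i * c) z) :=
            Nat.add_le_add_left e4 _
        _ = (∑ z ∈ nmS σ, cnt σ c z y * nm σ (W σ (i * c) z)) + 1 := by rw [← e3]; ring
        _ ≤ (∑ z, cnt σ c z y * nm σ (W σ (i * c) z)) + 1 := Nat.add_le_add_right e2 _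
        _ = nm σ (W σ (i * c + c) y) + 1 := by rw [e1]
    have hmul : (i + 1) * c = i * c + c := by ring
    have expand : (i + 1) * nm σ (W σ c y) = i * nm σ (W σ c y) + nm σ (W σ c y) := by ring
    rw [hmul, expand]
    linarith

lemma nm_rec_one (σ : Monoid.End (FreeMonoid V)) {k c : ℕ} {y : V}
    (hb : ∀ i ≥ 1, ∀ x y : V, cnt σ i x y ≤ k)
    (hc : 1 ≤ c) (h : 1 ≤ cnt σ c y y) :
    nm σ (W σ c y) = 1 := by
  have hy : ¬ Mor σ y := nonmor_of_rec σ hc h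
  have hub : ∀ m, 1 ≤ m → nm σ (W σ m y) ≤ Fintype.card V * k := by
    intro m hm
    rw [nm_W]
    calc ∑ x ∈ nmS σ, cnt σ m x y ≤ ∑ _x ∈ nmS σ, k :=
        Finset.sum_le_sum (fun x _ => hb m hm x y)
      _ = (nmS σ).card * k := by rw [Finset.sum_const, smul_eq_mul]
      _ ≤ Fintype.card V * k := by
          apply Nat.mul_le_mul_right
          exact le_trans (Finset.card_le_card (Finset.subset_univ _)) (le_of_eq Finset.card_univ)
  set K := Fintype.card V * k with hK
  have h1 := nm_growth σ hc h (K + 1)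
  have h2 : nm σ (W σ ((K + 1) * c) y) ≤ K := hub ((K + 1) * c) (Nat.mul_pos (by omega) hc)
  have h3 : 1 ≤ nm σ (W σ c y) := nm_ge_one σ hy c
  by_contra hne
  have h4 : 2 ≤ nm σ (W σ c y) := by omega
  have h5 : (K + 1) * 2 ≤ (K + 1) * nm σ (W σ c y) := Nat.mul_le_mul_left _ h4
  linarith

/-- key structural lemma: a recurrent letter has period 1 and its image
contains itself once and otherwise only mortal letters. -/
lemma rec_one (σ : Monoid.End (FreeMonoid V)) {k n : ℕ} {y : V}
    (hb : ∀ i ≥ 1, ∀ x y : V, cnt σ i x y ≤ k)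
    (hcc : ∀ m, n ≤ m → ∀ x y : V, cnt σ m x y = cnt σ n x y)
    (hrec : ∃ c, 1 ≤ c ∧ 1 ≤ cnt σ c y y) :
    cnt σ 1 y y = 1 ∧ ∀ x, ¬ Mor σ x → x ≠ y → cnt σ 1 x y = 0 := by
  classical
  have hp : ∃ c, 1 ≤ c ∧ 1 ≤ cnt σ c y y := hrec
  obtain ⟨c, hc1, hcy, hmin⟩ :
      ∃ c, 1 ≤ c ∧ 1 ≤ cnt σ c y y ∧ ∀ r, r < c → ¬ (1 ≤ r ∧ 1 ≤ cnt σ r y y) :=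
    ⟨Nat.find hp, (Nat.find_spec hp).1, (Nat.find_spec hp).2, fun r hr => Nat.find_min hp hr⟩
  have hy : ¬ Mor σ y := nonmor_of_rec σ hc1 hcy
  have hpow : ∀ i, 1 ≤ cnt σ (i * c) y y := cnt_self_pow σ hcy
  have hall : ∀ j, nm σ (W σ j y) = 1 := by
    intro j
    have hle : j ≤ (j + 1) * c :=
      le_trans (Nat.le_succ j) (Nat.le_mul_of_pos_right (j + 1) hc1)
    have hup : nm σ (W σ j y) ≤ nm σ (W σ ((j + 1) * c) y) := nm_W_mono σ y hle
    have h1 : nm σ (W σ ((j + 1) * c) y) = 1 :=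
      nm_rec_one σ hb (Nat.mul_pos (by omega) hc1) (hpow (j + 1))
    have hlo : 1 ≤ nm σ (W σ j y) := nm_ge_one σ hy j
    exact le_antisymm (h1 ▸ hup) hlo
  have huniq : ∀ j, ∃ z, ¬ Mor σ z ∧ 1 ≤ cnt σ j z y ∧
      ∀ x, ¬ Mor σ x → 1 ≤ cnt σ j x y → x = z := by
    intro j
    have h1 := hall j
    rw [nm_W] at h1
    obtain ⟨z, hzmem, hz1⟩ : ∃ z ∈ nmS σ, 1 ≤ cnt σ j z y := by
      by_contra hc'
      push_neg at hc'
      have h0 : ∑ x ∈ nmS σ, cnt σ j x y = 0 :=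
        Finset.sum_eq_zero (fun x hx => by have := hc' x hx; omega)
      omega
    refine ⟨z, mem_nmS.mp hzmem, hz1, ?_⟩
    intro x hx hx1
    by_contra hne
    have hxmem : x ∈ nmS σ := mem_nmS.mpr hx
    have h2 : 2 ≤ ∑ t ∈ nmS σ, cnt σ j t y := by
      have hsub : ({x, z} : Finset V) ⊆ nmS σ := by
        intro t ht
        simp only [Finset.mem_insert, Finset.mem_singleton] at ht
        rcases ht with rfl | rfl
        · exact hxmem
        · exact hzmem
      have h3 : ∑ t ∈ ({x, z} : Finset V), cnt σ j t y ≤ ∑ t ∈ nmS σ, cnt σ j t y :=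
        Finset.sum_le_sum_of_subset hsub
      rw [Finset.sum_pair hne] at h3
      omega
    omega
  choose s hs1 hs2 hs3 using huniq
  have K1 : ∀ m, 1 ≤ cnt σ m y y → s m = y := fun m hm => (hs3 m y hy hm).symm
  have S1 : ∀ a b x, ¬ Mor σ x →
      cnt σ (a + b) x y = cnt σ b (s b) y * cnt σ a x (s b) := by
    intro a b x hx
    rw [cnt_add σ a b x y]
    apply Finset.sum_eq_single (s b)
    · intro z _ hzne
      by_cases hz : Mor σ z
      · have h0 : cnt σ a x z = 0 := by
          by_contra h0'
          exact hx (mor_desc σ (b := a) hz (by omega))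
        rw [h0]; ring
      · have h0 : cnt σ b z y = 0 := by
          by_contra h0'
          exact hzne (hs3 b z hz (by omega))
        rw [h0]; ring
    · intro habs
      exact absurd (Finset.mem_univ _) habs
  have hsc : s c = y := K1 c hcy
  have K2 : ∀ j, s (j + c) = s j := by
    intro j
    have h1 : cnt σ (j + c) (s (j + c)) y = cnt σ c (s c) y * cnt σ j (s (j + c)) (s c) :=
      S1 j c (s (j + c)) (hs1 (j + c))
    rw [hsc] at h1
    have h2 := hs2 (j + c)
    have h3 : 1 ≤ cnt σ j (s (j + c)) y := by
      by_contra h0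
      have h4 : cnt σ j (s (j + c)) y = 0 := by omega
      rw [h4, Nat.mul_zero] at h1
      omega
    exact hs3 j (s (j + c)) (hs1 (j + c)) h3
  have K2q : ∀ q j, s (j + q * c) = s j := by
    intro q
    induction q with
    | zero => intro j; simp
    | succ q ih =>
      intro j
      have e : j + (q + 1) * c = (j + q * c) + c := by ring
      rw [e, K2, ih]
  have K3 : ∀ m, 1 ≤ m → 1 ≤ cnt σ m y y → c ∣ m := by
    intro m hm hmy
    have hr : m % c + (m / c) * c = m := by
      rw [Nat.mul_comm]
      exact Nat.mod_add_div m c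
    have h1 : s (m % c) = y := by
      have h2 := K2q (m / c) (m % c)
      rw [hr] at h2
      rw [← h2, K1 m hmy]
    rcases Nat.eq_zero_or_pos (m % c) with h0 | h0
    · exact Nat.dvd_of_mod_eq_zero h0
    · exfalso
      have hcnt : 1 ≤ cnt σ (m % c) y y := by
        have h2 := hs2 (m % c)
        rw [h1] at h2
        exact h2
      exact hmin (m % c) (Nat.mod_lt m (by omega)) ⟨h0, hcnt⟩
  have hcone : c = 1 := by
    have hm1 : 1 ≤ cnt σ ((n + 1) * c) y y := hpow (n + 1)
    have hge : n ≤ (n + 1) * c :=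
      le_trans (Nat.le_succ n) (Nat.le_mul_of_pos_right (n + 1) hc1)
    have e1 : cnt σ ((n + 1) * c) y y = cnt σ n y y := hcc _ hge y y
    have e2 : cnt σ ((n + 1) * c + 1) y y = cnt σ n y y := hcc _ (by omega) y y
    have hm2 : 1 ≤ cnt σ ((n + 1) * c + 1) y y := by omega
    have d1 : c ∣ (n + 1) * c := ⟨n + 1, by ring⟩
    have d2 : c ∣ (n + 1) * c + 1 := K3 _ (by omega) hm2
    have d3 : c ∣ 1 := (Nat.dvd_add_right d1).mp d2
    exact Nat.dvd_one.mp d3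
  rw [hcone] at hcy
  have hymem : y ∈ nmS σ := mem_nmS.mpr hy
  constructor
  · have h1 := hall 1
    rw [nm_W] at h1
    have hle : cnt σ 1 y y ≤ 1 := by
      have h2 := Finset.single_le_sum (f := fun x => cnt σ 1 x y)
        (fun _ _ => Nat.zero_le _) hymem
      rw [h1] at h2
      exact h2
    exact le_antisymm hle hcy
  · intro x hx hxy
    by_contra h0
    have hx1 : 1 ≤ cnt σ 1 x y := by omega
    have hx' : x = s 1 := hs3 1 x hx hx1
    have hyy : y = s 1 := hs3 1 y hy hcy
    exact hxy (hx'.trans hyy.symm)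

lemma chain_exists (σ : Monoid.End (FreeMonoid V)) :
    ∀ (j : ℕ) (x z : V), 1 ≤ cnt σ j x z →
      ∃ f : ℕ → V, f 0 = z ∧ f j = x ∧ ∀ i < j, 1 ≤ cnt σ 1 (f (i + 1)) (f i) := by
  intro j
  induction j with
  | zero =>
    intro x z h
    have hxz : x = z := by
      by_cases he : z = x
      · exact he.symm
      · rw [cnt_zero, if_neg he] at h; omega
    subst hxz
    exact ⟨fun _ => x, rfl, rfl, by omega⟩
  | succ j ih =>
    intro x z h
    have h' : 1 ≤ cnt σ (1 + j) x z := by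
      rw [Nat.add_comm 1 j]; exact h
    rw [cnt_add σ 1 j x z] at h'
    obtain ⟨u, -, hu⟩ : ∃ u ∈ Finset.univ, 1 ≤ cnt σ j u z * cnt σ 1 x u := by
      by_contra hc
      push_neg at hc
      have h0 : ∑ u, cnt σ j u z * cnt σ 1 x u = 0 :=
        Finset.sum_eq_zero (fun u hu => by have := hc u hu; omega)
      omega
    have hu1 : 1 ≤ cnt σ j u z := by
      rcases Nat.eq_zero_or_pos (cnt σ j u z) with h0 | h0
      · rw [h0, Nat.zero_mul] at hu; omega
      · exact h0
    have hu2 : 1 ≤ cnt σ 1 x u := by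
      rcases Nat.eq_zero_or_pos (cnt σ 1 x u) with h0 | h0
      · rw [h0, Nat.mul_zero] at hu; omega
      · exact h0
    obtain ⟨f, hf0, hfj, hfc⟩ := ih u z hu1
    refine ⟨fun i => if i = j + 1 then x else f i,
      by have h9 : (0:ℕ) ≠ j + 1 := by omega
         simp [h9, hf0],
      by simp, ?_⟩
    intro i hi
    simp only
    rcases Nat.lt_or_ge i j with h1 | h1
    · rw [if_neg (by omega), if_neg (by omega)]
      exact hfc i h1
    · have hij : i = j := by omega
      subst hij
      rw [if_pos rfl, if_neg (by omega), hfj]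
      exact hu2

lemma chain_cnt (σ : Monoid.End (FreeMonoid V)) {j : ℕ} {f : ℕ → V}
    (hf : ∀ i < j, 1 ≤ cnt σ 1 (f (i + 1)) (f i)) :
    ∀ a d, a + d ≤ j → 1 ≤ cnt σ d (f (a + d)) (f a) := by
  intro a d
  induction d with
  | zero => intro _; simp [cnt_zero]
  | succ d ih =>
    intro hle
    have h1 := ih (by omega)
    have h2 := hf (a + d) (by omega)
    have h3 := cnt_comp_ge σ 1 d (f (a + d + 1)) (f (a + d)) (f a)
    have e2 : (1 : ℕ) + d = d + 1 := by omega
    rw [e2] at h3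
    have e : a + (d + 1) = a + d + 1 := by omega
    rw [e]
    calc 1 = 1 * 1 := rfl
      _ ≤ cnt σ d (f (a + d)) (f a) * cnt σ 1 (f (a + d + 1)) (f (a + d)) :=
        Nat.mul_le_mul h1 h2
      _ ≤ cnt σ (d + 1) (f (a + d + 1)) (f a) := h3

/-- every nonmortal letter occurring at depth `card V` is recurrent (with the
structure from `rec_one`). -/
lemma depth_rec (σ : Monoid.End (FreeMonoid V)) {k n : ℕ} {x z : V}
    (hb : ∀ i ≥ 1, ∀ x y : V, cnt σ i x y ≤ k)
    (hcc : ∀ m, n ≤ m → ∀ x y : V, cnt σ m x y = cnt σ n x y)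
    (hx : ¬ Mor σ x) (hocc : 1 ≤ cnt σ (Fintype.card V) x z) :
    cnt σ 1 x x = 1 ∧ ∀ x', ¬ Mor σ x' → x' ≠ x → cnt σ 1 x' x = 0 := by
  classical
  obtain ⟨f, hf0, hfl, hfc⟩ := chain_exists σ (Fintype.card V) x z hocc
  obtain ⟨A, B, hAB, hBle, hfAB⟩ : ∃ A B : ℕ, A < B ∧ B ≤ Fintype.card V ∧ f A = f B := by
    have hclt : Fintype.card V < Fintype.card (Fin (Fintype.card V + 1)) := by simp
    obtain ⟨a, b, hab, hfab⟩ :=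
      Fintype.exists_ne_map_eq_of_card_lt (fun i : Fin (Fintype.card V + 1) => f i) hclt
    rcases Nat.lt_or_ge (a : ℕ) (b : ℕ) with h1 | h1
    · exact ⟨a, b, h1, by omega, hfab⟩
    · have h2 : (b : ℕ) < (a : ℕ) := by
        rcases Nat.lt_or_ge (b : ℕ) (a : ℕ) with h2 | h2
        · exact h2
        · exfalso; exact hab (Fin.ext (by omega))
      exact ⟨b, a, h2, by omega, hfab.symm⟩
  have hrec : 1 ≤ cnt σ (B - A) (f B) (f B) := by
    have h1 := chain_cnt σ hfc A (B - A) (by omega)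
    have e : A + (B - A) = B := by omega
    rw [e, hfAB] at h1
    exact h1
  have hrone := rec_one σ hb hcc (y := f B) ⟨B - A, by omega, hrec⟩
  have hnm : ∀ i, i ≤ Fintype.card V → ¬ Mor σ (f i) := by
    intro i hi hmor
    have hcnt : 1 ≤ cnt σ (Fintype.card V - i) (f (Fintype.card V)) (f i) := by
      have h1 := chain_cnt σ hfc i (Fintype.card V - i) (by omega)
      have e : i + (Fintype.card V - i) = Fintype.card V := by omega
      rw [e] at h1
      exact h1
    rw [hfl] at hcnt
    exact hx (mor_desc σ hmor hcnt)
  have hprop : ∀ i, A ≤ i → i ≤ Fintype.card V → f i = f B := by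
    intro i hAi
    induction i, hAi using Nat.le_induction with
    | base => intro _; exact hfAB
    | succ i hAi ih =>
      intro hi
      have hfi : f i = f B := ih (by omega)
      have h1 : 1 ≤ cnt σ 1 (f (i + 1)) (f i) := hfc i (by omega)
      rw [hfi] at h1
      have h2 : ¬ Mor σ (f (i + 1)) := hnm (i + 1) hi
      by_contra hne
      have h3 := hrone.2 (f (i + 1)) h2 hne
      omega
  have hxB : x = f B := by
    rw [← hfl]
    exact hprop (Fintype.card V) (by omega) le_rfl
  rw [hxB]
  exact hrone

lemma hom_eq_on (φ ψ : FreeMonoid V →* FreeMonoid V) (w : FreeMonoid V)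
    (h : ∀ t ∈ FreeMonoid.toList w, φ (FreeMonoid.of t) = ψ (FreeMonoid.of t)) :
    φ w = ψ w := by
  induction w using FreeMonoid.inductionOn' with
  | one => rw [map_one, map_one]
  | of_mul a t ih =>
    have ha : φ (FreeMonoid.of a) = ψ (FreeMonoid.of a) := h a (by
      rw [FreeMonoid.toList_mul, FreeMonoid.toList_of]
      exact List.mem_cons_self)
    have ht : ∀ u ∈ FreeMonoid.toList t, φ (FreeMonoid.of u) = ψ (FreeMonoid.of u) := by
      intro u hu
      exact h u (by
        rw [FreeMonoid.toList_mul, FreeMonoid.toList_of]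
        exact List.mem_cons_of_mem a hu)
    rw [map_mul, map_mul, ha, ih ht]

lemma hom_eq_one_on (φ : FreeMonoid V →* FreeMonoid V) (w : FreeMonoid V)
    (h : ∀ t ∈ FreeMonoid.toList w, φ (FreeMonoid.of t) = 1) :
    φ w = 1 := by
  induction w using FreeMonoid.inductionOn' with
  | one => exact map_one φ
  | of_mul a t ih =>
    have ha : φ (FreeMonoid.of a) = 1 := h a (by
      rw [FreeMonoid.toList_mul, FreeMonoid.toList_of]
      exact List.mem_cons_self)
    have ht : ∀ u ∈ FreeMonoid.toList t, φ (FreeMonoid.of u) = 1 := by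
      intro u hu
      exact h u (by
        rw [FreeMonoid.toList_mul, FreeMonoid.toList_of]
        exact List.mem_cons_of_mem a hu)
    rw [map_mul, ha, ih ht, one_mul]

lemma hom_single (φ : FreeMonoid V →* FreeMonoid V) (w : FreeMonoid V) (t : V)
    (h1 : occFM w t = 1)
    (h2 : ∀ x ∈ FreeMonoid.toList w, x ≠ t → φ (FreeMonoid.of x) = 1) :
    φ w = φ (FreeMonoid.of t) := by
  induction w using FreeMonoid.inductionOn' with
  | one => rw [occ_one] at h1; omega
  | of_mul a u ih =>
    by_cases hat : a = t
    · subst hat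
      rw [occ_mul, occ_of, if_pos rfl] at h1
      have hu0 : occFM u a = 0 := by omega
      have hu1 : φ u = 1 := by
        apply hom_eq_one_on
        intro v hv
        have hva : v ≠ a := by
          rintro rfl
          have := (occ_pos_iff u v).mp hv
          omega
        exact h2 v (by
          rw [FreeMonoid.toList_mul, FreeMonoid.toList_of]
          exact List.mem_cons_of_mem a hv) hva
      rw [map_mul, hu1, mul_one]
    · have ha1 : φ (FreeMonoid.of a) = 1 := h2 a (by
        rw [FreeMonoid.toList_mul, FreeMonoid.toList_of]
        exact List.mem_cons_self) hat
      have hocc : occFM u t = 1 := by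
        rw [occ_mul, occ_of, if_neg hat] at h1
        omega
      rw [map_mul, ha1, one_mul]
      apply ih hocc
      intro v hv hvt
      exact h2 v (by
        rw [FreeMonoid.toList_mul, FreeMonoid.toList_of]
        exact List.mem_cons_of_mem a hv) hvt

end SubStab

/-- Let `σ` be an endomorphism of the free monoid over a finite variable set `V`
of size `ℓ`, `k`-bounded under iteration, whose occurrence-count matrix `M`
satisfies `M ^ n = M ^ (n+1)`. Then `σ` itself stabilizes:
`σ ^ ((k+1)·ℓ) = σ ^ ((k+1)·ℓ + 1)` as maps on the free monoid. -/
theorem substitution_stabilizes {V : Type*} [Fintype V] [DecidableEq V]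
    (σ : Monoid.End (FreeMonoid V)) (k n : ℕ)
    (hbound : ∀ i ≥ 1, ∀ x y : V, occFM ((σ ^ i) (FreeMonoid.of y)) x ≤ k)
    (M : Matrix V V ℕ)
    (hM : ∀ x y : V, M x y = occFM (σ (FreeMonoid.of y)) x)
    (haper : M ^ n = M ^ (n + 1)) :
    σ ^ ((k + 1) * Fintype.card V) = σ ^ ((k + 1) * Fintype.card V + 1) := by
  classical
  have hb : ∀ i ≥ 1, ∀ x y : V, SubStab.cnt σ i x y ≤ k := hbound
  have hpowM : ∀ m, n ≤ m → M ^ m = M ^ n := by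
    intro m hm
    induction m, hm using Nat.le_induction with
    | base => rfl
    | succ m hm ih =>
      calc M ^ (m + 1) = M ^ m * M := pow_succ M m
        _ = M ^ n * M := by rw [ih]
        _ = M ^ (n + 1) := (pow_succ M n).symm
        _ = M ^ n := haper.symm
  have hcc : ∀ m, n ≤ m → ∀ x y : V, SubStab.cnt σ m x y = SubStab.cnt σ n x y := by
    intro m hm x y
    rw [← SubStab.matrix_pow σ M hM m x y, ← SubStab.matrix_pow σ M hM n x y, hpowM m hm]
  apply FreeMonoid.hom_eq
  intro y
  show SubStab.W σ ((k + 1) * Fintype.card V) y = SubStab.W σ ((k + 1) * Fintype.card V + 1) y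
  have hcard : 1 ≤ Fintype.card V := Fintype.card_pos_iff.mpr ⟨y⟩
  rcases Nat.eq_zero_or_pos k with hk | hk
  · subst hk
    have hone : ∀ y' : V, σ (FreeMonoid.of y') = 1 := by
      intro y'
      rw [← SubStab.W_one σ y', SubStab.eq_one_iff]
      intro x
      exact Nat.le_zero.mp (hb 1 le_rfl x y')
    have hW1 : ∀ m (y' : V), SubStab.W σ (m + 1) y' = 1 := by
      intro m y'
      rw [SubStab.W_succ, hone, map_one]
    obtain ⟨m, hm⟩ : ∃ m, (0 + 1) * Fintype.card V = m + 1 :=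
      ⟨Fintype.card V - 1, by omega⟩
    rw [hm, hW1 m y, hW1 (m + 1) y]
  · set j := k * Fintype.card V with hj
    have hjl : Fintype.card V ≤ j := by
      rw [hj]
      exact Nat.le_mul_of_pos_left _ hk
    have e1 : SubStab.W σ ((k + 1) * Fintype.card V) y
        = (σ ^ j) (SubStab.W σ (Fintype.card V) y) := by
      rw [← SubStab.W_add σ j (Fintype.card V) y]
      congr 1
      rw [hj]; ring
    have e2 : SubStab.W σ ((k + 1) * Fintype.card V + 1) y
        = (σ ^ (j + 1)) (SubStab.W σ (Fintype.card V) y) := by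
      rw [← SubStab.W_add σ (j + 1) (Fintype.card V) y]
      congr 1
      rw [hj]; ring
    rw [e1, e2]
    apply SubStab.hom_eq_on
    intro t ht
    show SubStab.W σ j t = SubStab.W σ (j + 1) t
    by_cases hmor : SubStab.Mor σ t
    · rw [SubStab.mor_mono σ (SubStab.mor_card σ hmor) (by omega),
        SubStab.mor_mono σ (SubStab.mor_card σ hmor) (by omega)]
    · have hocc : 1 ≤ SubStab.cnt σ (Fintype.card V) t y :=
        (SubStab.occ_pos_iff _ _).mp ht
      obtain ⟨hc1, hc2⟩ := SubStab.depth_rec σ hb hcc hmor hocc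
      rw [SubStab.W_succ σ j t]
      have h1' : occFM (σ (FreeMonoid.of t)) t = 1 := by
        have := hc1
        rwa [SubStab.cnt_def, SubStab.W_one] at this
      have h2' : ∀ s ∈ FreeMonoid.toList (σ (FreeMonoid.of t)), s ≠ t →
          (σ ^ j) (FreeMonoid.of s) = 1 := by
        intro s hs hsne
        by_cases hms : SubStab.Mor σ s
        · exact SubStab.mor_mono σ (SubStab.mor_card σ hms) (by omega)
        · exfalso
          have hs1 : 1 ≤ SubStab.cnt σ 1 s t := by
            have h3 := (SubStab.occ_pos_iff _ _).mp hs
            rw [SubStab.cnt_def, SubStab.W_one]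
            exact h3
          have h4 := hc2 s hms hsne
          omega
      exact (SubStab.hom_single (σ ^ j) (σ (FreeMonoid.of t)) t h1' h2').symm
end

section
/- The number of rooted forests over a finite set Q of size n (forests of rooted trees with vertices nonempty subsets of Q, disjoint roots, and children of each vertex pairwise disjoint proper subsets of that vertex) is at most (2n)^(2n-2) / (n-2)! for n ≥ 2. -/
/-- `s` is a child of `t` in the forest with vertex set `V`: `s ⊊ t` and no
vertex lies strictly between them. -/
def ChildRel {Q : Type*} (V : Finset (Finset Q)) (s t : Finset Q) : Prop :=
  s ∈ V ∧ t ∈ V ∧ s ⊂ t ∧ ¬ ∃ u ∈ V, s ⊂ u ∧ u ⊂ t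

/-- A vertex set `V` of nonempty subsets of `Q` is a rooted forest if its roots
(maximal vertices) are pairwise disjoint and the children of every vertex are
pairwise disjoint (children are proper subsets of their parent by definition
of `ChildRel`). Such a forest is determined by its vertex set. -/
def IsForest {Q : Type*} (V : Finset (Finset Q)) : Prop :=
  (∀ s ∈ V, s.Nonempty) ∧
  (∀ s ∈ V, ∀ t ∈ V, (¬ ∃ u ∈ V, s ⊂ u) → (¬ ∃ u ∈ V, t ⊂ u) → s ≠ t →
      Disjoint s t) ∧
  (∀ t ∈ V, ∀ s₁ s₂ : Finset Q, ChildRel V s₁ t → ChildRel V s₂ t → s₁ ≠ s₂ →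
      Disjoint s₁ s₂)

set_option linter.unusedSectionVars false
section Helpers

variable {Q : Type*} [DecidableEq Q]

noncomputable def amin (T : Finset (Finset Q)) : Finset Q :=
  if hT : T.Nonempty then (Finset.exists_min_image T (fun s => s.card) hT).choose else ∅

lemma amin_mem {T : Finset (Finset Q)} (hT : T.Nonempty) : amin T ∈ T := by
  rw [amin, dif_pos hT]
  exact (Finset.exists_min_image T (fun s => s.card) hT).choose_spec.1

lemma amin_min {T : Finset (Finset Q)} (hT : T.Nonempty) {u : Finset Q} (hu : u ∈ T) :
    (amin T).card ≤ u.card := by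
  rw [amin, dif_pos hT]
  exact (Finset.exists_min_image T (fun s => s.card) hT).choose_spec.2 u hu

noncomputable def amax (T : Finset (Finset Q)) : Finset Q :=
  if hT : T.Nonempty then (Finset.exists_max_image T (fun s => s.card) hT).choose else ∅

lemma amax_mem {T : Finset (Finset Q)} (hT : T.Nonempty) : amax T ∈ T := by
  rw [amax, dif_pos hT]
  exact (Finset.exists_max_image T (fun s => s.card) hT).choose_spec.1

lemma amax_max {T : Finset (Finset Q)} (hT : T.Nonempty) {u : Finset Q} (hu : u ∈ T) :
    u.card ≤ (amax T).card := by
  rw [amax, dif_pos hT]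
  exact (Finset.exists_max_image T (fun s => s.card) hT).choose_spec.2 u hu

/-- the m-th element of a finset of naturals -/
lemma rank_exists (T : Finset ℕ) : ∀ m, m < T.card → ∃ ℓ ∈ T, (T.filter (· < ℓ)).card = m := by
  intro m
  induction m with
  | zero =>
    intro hm
    have hT : T.Nonempty := Finset.card_pos.mp hm
    refine ⟨T.min' hT, T.min'_mem hT, ?_⟩
    rw [Finset.card_eq_zero]
    ext x
    simp only [Finset.mem_filter, Finset.notMem_empty, iff_false, not_and]
    intro hx hlt
    exact absurd (T.min'_le x hx) (not_le.mpr hlt)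
  | succ m ih =>
    intro hm
    obtain ⟨ℓ, hℓT, hℓc⟩ := ih (Nat.lt_of_succ_lt hm)
    have hgt : (T.filter (ℓ < ·)).Nonempty := by
      by_contra h
      rw [Finset.not_nonempty_iff_eq_empty] at h
      have : T ⊆ T.filter (· < ℓ) ∪ {ℓ} := by
        intro x hx
        rcases lt_trichotomy x ℓ with h1 | h1 | h1
        · exact Finset.mem_union_left _ (Finset.mem_filter.mpr ⟨hx, h1⟩)
        · simp [h1]
        · exact absurd (Finset.mem_filter.mpr ⟨hx, h1⟩) (by simp [h])
      have h3 := Finset.card_le_card this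
      have h2 := Finset.card_union_le (T.filter (· < ℓ)) ({ℓ} : Finset ℕ)
      simp only [Finset.card_singleton] at h2
      omega
    set ℓ' := (T.filter (ℓ < ·)).min' hgt with hℓ'
    have hℓ'mem := (T.filter (ℓ < ·)).min'_mem hgt
    rw [Finset.mem_filter] at hℓ'mem
    refine ⟨ℓ', hℓ'mem.1, ?_⟩
    have : T.filter (· < ℓ') = insert ℓ (T.filter (· < ℓ)) := by
      ext x
      simp only [Finset.mem_filter, Finset.mem_insert]
      constructor
      · rintro ⟨hx, hxℓ'⟩
        rcases lt_trichotomy x ℓ with h1 | h1 | h1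
        · exact Or.inr ⟨hx, h1⟩
        · exact Or.inl h1
        · exact absurd (Finset.min'_le _ x (Finset.mem_filter.mpr ⟨hx, h1⟩)) (not_le.mpr hxℓ')
      · rintro (rfl | ⟨hx, hxℓ⟩)
        · exact ⟨hℓT, hℓ'mem.2⟩
        · exact ⟨hx, hxℓ.trans hℓ'mem.2⟩
    rw [this, Finset.card_insert_of_notMem (by simp), hℓc]


/-- existence of maximal supersets in `V` -/
lemma forest_maxsup {V : Finset (Finset Q)} {s : Finset Q} (hs : s ∈ V) :
    ∃ r ∈ V, s ⊆ r ∧ ∀ u ∈ V, ¬ r ⊂ u := by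
  set T := V.filter (fun u => s ⊆ u) with hT
  have hTne : T.Nonempty := ⟨s, by simp [hT, hs]⟩
  have hmem := amax_mem hTne
  rw [hT, Finset.mem_filter] at hmem
  refine ⟨amax T, hmem.1, hmem.2, ?_⟩
  intro u hu hcon
  have : u ∈ T := Finset.mem_filter.mpr ⟨hu, hmem.2.trans hcon.subset⟩
  exact absurd (amax_max hTne this) (not_le.mpr (Finset.card_lt_card hcon))

/-- existence of a child above a strict subset -/
lemma forest_child {V : Finset (Finset Q)} {s r : Finset Q} (hs : s ∈ V) (hr : r ∈ V)
    (hsr : s ⊂ r) : ∃ c, ChildRel V c r ∧ s ⊆ c := by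
  set T := V.filter (fun u => s ⊆ u ∧ u ⊂ r) with hT
  have hTne : T.Nonempty := ⟨s, by simp [hT, hs, hsr]⟩
  have hmem := amax_mem hTne
  rw [hT, Finset.mem_filter] at hmem
  refine ⟨amax T, ⟨hmem.1, hr, hmem.2.2, ?_⟩, hmem.2.1⟩
  rintro ⟨u, hu, hcu, hur⟩
  have : u ∈ T := Finset.mem_filter.mpr ⟨hu, hmem.2.1.trans hcu.subset, hur⟩
  exact absurd (amax_max hTne this) (not_le.mpr (Finset.card_lt_card hcu))

lemma forest_nested_aux {V : Finset (Finset Q)} (hV : IsForest V) :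
    ∀ m : ℕ, ∀ r ∈ V, r.card ≤ m → ∀ s ∈ V, ∀ t ∈ V, s ⊆ r → t ⊆ r →
      ¬ Disjoint s t → s ⊆ t ∨ t ⊆ s := by
  intro m
  induction m with
  | zero =>
    intro r hr hcard
    have := Finset.card_pos.mpr (hV.1 r hr)
    omega
  | succ m ih =>
    intro r hr hcard s hs t ht hsr htr hdisj
    by_cases hseq : s = r
    · right; rw [hseq]; exact htr
    by_cases hteq : t = r
    · left; rw [hteq]; exact hsr
    have hsr' : s ⊂ r := Finset.ssubset_iff_subset_ne.mpr ⟨hsr, hseq⟩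
    have htr' : t ⊂ r := Finset.ssubset_iff_subset_ne.mpr ⟨htr, hteq⟩
    obtain ⟨cs, hcs, hscs⟩ := forest_child hs hr hsr'
    obtain ⟨ct, hct, htct⟩ := forest_child ht hr htr'
    by_cases hcc : cs = ct
    · refine ih cs hcs.1 ?_ s hs t ht hscs (hcc ▸ htct) hdisj
      have := Finset.card_lt_card hcs.2.2.1
      omega
    · exact absurd (Disjoint.mono hscs htct (hV.2.2 r hr cs ct hcs hct hcc)) hdisj

/-- a forest is a laminar family -/
lemma forest_nested {V : Finset (Finset Q)} (hV : IsForest V) {s t : Finset Q}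
    (hs : s ∈ V) (ht : t ∈ V) (hd : ¬ Disjoint s t) : s ⊆ t ∨ t ⊆ s := by
  obtain ⟨rs, hrs, hsrs, hrsmax⟩ := forest_maxsup hs
  obtain ⟨rt, hrt, htrt, hrtmax⟩ := forest_maxsup ht
  by_cases hrr : rs = rt
  · exact forest_nested_aux hV rs.card rs hrs le_rfl s hs t ht hsrs (by rw [hrr]; exact htrt) hd
  · have := hV.2.1 rs hrs rt hrt (fun ⟨u, hu, hc⟩ => hrsmax u hu hc)
      (fun ⟨u, hu, hc⟩ => hrtmax u hu hc) hrr
    exact absurd (Disjoint.mono hsrs htrt this) hd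

/-- laminar families of sets of size ≥ 2 contained in `u` have < `u.card` members -/
lemma lam_bound : ∀ (N : ℕ) (F : Finset (Finset Q)) (u : Finset Q), F.card = N →
    (∀ s ∈ F, 2 ≤ s.card) →
    (∀ s ∈ F, ∀ t ∈ F, s ⊆ t ∨ t ⊆ s ∨ Disjoint s t) →
    (∀ s ∈ F, s ⊆ u) → F.Nonempty → F.card < u.card := by
  intro N
  induction N using Nat.strong_induction_on with
  | _ N ih =>
    intro F u hN hc2 hlam hsub hne
    have hsmem := amin_mem hne
    set s := amin F with hsdef
    obtain ⟨x, hx, y, hy, hxy⟩ := Finset.one_lt_card.mp (lt_of_lt_of_le one_lt_two (hc2 s hsmem))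
    have key : ∀ t ∈ F, t ≠ s → y ∈ t → s ⊆ t := by
      intro t htF hts hyt
      rcases hlam s hsmem t htF with h | h | h
      · exact h
      · exact absurd (Finset.eq_of_subset_of_card_le h (amin_min hne htF)) hts
      · exact absurd h (Finset.not_disjoint_iff.mpr ⟨y, hy, hyt⟩)
    have keyx : ∀ t ∈ F, t ≠ s → (y ∈ t ↔ x ∈ t.erase y) := by
      intro t htF hts
      constructor
      · intro hyt
        exact Finset.mem_erase.mpr ⟨hxy, key t htF hts hyt hx⟩
      · intro hxt
        have hxt' := (Finset.mem_erase.mp hxt).2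
        rcases hlam s hsmem t htF with h | h | h
        · exact h hy
        · exact absurd (Finset.eq_of_subset_of_card_le h (amin_min hne htF)) hts
        · exact absurd h (Finset.not_disjoint_iff.mpr ⟨x, hx, hxt'⟩)
    set F' := (F.erase s).image (fun t => t.erase y) with hF'
    have hinj : Set.InjOn (fun t : Finset Q => t.erase y) ↑(F.erase s) := by
      intro t1 h1 t2 h2 heq
      simp only at heq
      have m1 := Finset.mem_erase.mp h1
      have m2 := Finset.mem_erase.mp h2
      ext z
      by_cases hz : z = y
      · rw [hz, keyx t1 m1.2 m1.1, keyx t2 m2.2 m2.1, heq]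
      · have h3 : z ∈ t1.erase y ↔ z ∈ t2.erase y := by rw [heq]
        simpa [Finset.mem_erase, hz] using h3
    have hcard' : F'.card = F.card - 1 := by
      rw [hF', Finset.card_image_of_injOn hinj, Finset.card_erase_of_mem hsmem]
    have hycard : 1 ≤ u.card := Finset.card_pos.mpr ⟨y, hsub s hsmem hy⟩
    by_cases hFe : (F.erase s).Nonempty
    · have hF'ne : F'.Nonempty := hFe.image _
      have hstep : F'.card < (u.erase y).card := by
        refine ih F'.card ?_ F' (u.erase y) rfl ?_ ?_ ?_ hF'ne
        · have : 1 ≤ F.card := Finset.card_pos.mpr hne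
          omega
        · intro t' ht'
          obtain ⟨t, htm, rfl⟩ := Finset.mem_image.mp ht'
          have htm' := Finset.mem_erase.mp htm
          by_cases hyt : y ∈ t
          · have hst : s ⊆ t := key t htm'.2 htm'.1 hyt
            have : s ⊂ t := Finset.ssubset_iff_subset_ne.mpr ⟨hst, Ne.symm htm'.1⟩
            have h3 := Finset.card_lt_card this
            have h4 := hc2 s hsmem
            rw [Finset.card_erase_of_mem hyt]
            omega
          · rw [Finset.erase_eq_of_notMem hyt]
            exact hc2 t htm'.2
        · intro t1' h1' t2' h2'
          obtain ⟨t1, h1m, rfl⟩ := Finset.mem_image.mp h1'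
          obtain ⟨t2, h2m, rfl⟩ := Finset.mem_image.mp h2'
          rcases hlam t1 (Finset.mem_erase.mp h1m).2 t2 (Finset.mem_erase.mp h2m).2 with h | h | h
          · exact Or.inl (Finset.erase_subset_erase y h)
          · exact Or.inr (Or.inl (Finset.erase_subset_erase y h))
          · exact Or.inr (Or.inr (h.mono (Finset.erase_subset y t1) (Finset.erase_subset y t2)))
        · intro t' ht'
          obtain ⟨t, htm, rfl⟩ := Finset.mem_image.mp ht'
          exact Finset.erase_subset_erase y (hsub t (Finset.mem_erase.mp htm).2)
      rw [Finset.card_erase_of_mem (hsub s hsmem hy)] at hstep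
      omega
    · rw [Finset.not_nonempty_iff_eq_empty] at hFe
      have h1 : F.card = 1 := by
        have := Finset.card_erase_of_mem hsmem
        rw [hFe] at this
        simp at this
        have := Finset.card_pos.mpr hne
        omega
      have h4 := hc2 s hsmem
      have h5 := Finset.card_le_card (hsub s hsmem)
      omega

end Helpers

section Encoding
variable {Q : Type*} [Fintype Q] [DecidableEq Q]

/-- injective ℕ-encoding of finsets, reverse-monotone in cardinality -/
noncomputable def hfun (n : ℕ) (s : Finset Q) : ℕ :=
  (n - s.card) * Fintype.card (Finset Q) + (Fintype.equivFin (Finset Q) s : ℕ)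

def Bset (V : Finset (Finset Q)) : Finset (Finset Q) := V.filter fun s => 2 ≤ s.card

noncomputable def idx (n : ℕ) (V : Finset (Finset Q)) (s : Finset Q) : ℕ :=
  ((Bset V).filter fun u => hfun n u < hfun n s).card

def sig' (n : ℕ) (σ : Equiv.Perm (Fin (n - 2))) (k : ℕ) : ℕ :=
  if hk : k < n - 2 then (σ ⟨k, hk⟩ : ℕ) else 0

noncomputable def lab (n : ℕ) (V : Finset (Finset Q)) (σ : Equiv.Perm (Fin (n - 2))) (s : Finset Q) : ℕ :=
  if idx n V s = 0 then 0 else sig' n σ (idx n V s - 1) + 1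

def Pset (V : Finset (Finset Q)) (q : Q) : Finset (Finset Q) :=
  (Bset V).filter fun s => q ∈ s

def SupS (V : Finset (Finset Q)) (s : Finset Q) : Finset (Finset Q) :=
  (Bset V).filter fun u => s ⊂ u

noncomputable def iqf (n : ℕ) (V : Finset (Finset Q)) (σ : Equiv.Perm (Fin (n - 2))) (q : Q) : ℕ :=
  if (Pset V q).Nonempty then lab n V σ (amin (Pset V q)) else n - 1

noncomputable def parL (n : ℕ) (V : Finset (Finset Q)) (σ : Equiv.Perm (Fin (n - 2)))
    (s : Finset Q) : ℕ :=
  if (SupS V s).Nonempty then lab n V σ (amin (SupS V s)) else n - 1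

noncomputable def Aset (n : ℕ) (V : Finset (Finset Q)) (σ : Equiv.Perm (Fin (n - 2))) (ℓ : ℕ) :
    Finset (Finset Q) := (Bset V).filter fun s => lab n V σ s = ℓ

noncomputable def spc (n : ℕ) (V : Finset (Finset Q)) (σ : Equiv.Perm (Fin (n - 2))) (ℓ : ℕ) : ℕ :=
  ((Finset.Ico 1 ℓ).filter fun j => Aset n V σ j = ∅).card

noncomputable def raw (n : ℕ) (eqv : Q ≃ Fin n) (V : Finset (Finset Q))
    (σ : Equiv.Perm (Fin (n - 2))) (p : ℕ) : Bool × ℕ :=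
  if hp : p < n then
    (decide ({eqv.symm ⟨p, hp⟩} ∈ V), iqf n V σ (eqv.symm ⟨p, hp⟩))
  else if (Aset n V σ (p - n + 1)).Nonempty then
    (false, parL n V σ (amin (Aset n V σ (p - n + 1))))
  else (true, sig' n σ ((Bset V).card - 1 + spc n V σ (p - n + 1)))

variable {n : ℕ}

lemma card_le_n (hcard : Fintype.card Q = n) (s : Finset Q) : s.card ≤ n := by
  rw [← hcard, ← Finset.card_univ]
  exact Finset.card_le_card (Finset.subset_univ s)

lemma arith1 {a b da db M : ℕ} (h : b < a) (hdb : db < M) : b * M + db < a * M + da := by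
  have h2 : b * M + M ≤ a * M := by
    have h3 := Nat.mul_le_mul_right M (Nat.succ_le_of_lt h)
    rwa [Nat.succ_mul] at h3
  omega

lemma hfun_lt (hcard : Fintype.card Q = n) {s t : Finset Q} (h : s.card < t.card) :
    hfun n t < hfun n s := by
  have ht := card_le_n hcard t
  have hM : (Fintype.equivFin (Finset Q) t : ℕ) < Fintype.card (Finset Q) :=
    (Fintype.equivFin (Finset Q) t).isLt
  unfold hfun
  exact arith1 (by omega) hM

lemma hfun_inj (hcard : Fintype.card Q = n) : Function.Injective (hfun (Q := Q) n) := by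
  intro s t hst
  rcases lt_trichotomy s.card t.card with h | h | h
  · exact absurd hst (Nat.ne_of_gt (hfun_lt hcard h))
  · unfold hfun at hst
    rw [h] at hst
    have h2 : (Fintype.equivFin (Finset Q) s : ℕ) = (Fintype.equivFin (Finset Q) t : ℕ) :=
      Nat.add_left_cancel hst
    exact (Fintype.equivFin (Finset Q)).injective (Fin.val_injective h2)
  · exact absurd hst (Nat.ne_of_lt (hfun_lt hcard h))

lemma mem_Bset {V : Finset (Finset Q)} {s : Finset Q} :
    s ∈ Bset V ↔ s ∈ V ∧ 2 ≤ s.card := Finset.mem_filter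

lemma Bset_lam {V : Finset (Finset Q)} (hV : IsForest V) {s t : Finset Q}
    (hs : s ∈ Bset V) (ht : t ∈ Bset V) : s ⊆ t ∨ t ⊆ s ∨ Disjoint s t := by
  by_cases hd : Disjoint s t
  · exact Or.inr (Or.inr hd)
  · rcases forest_nested hV (mem_Bset.mp hs).1 (mem_Bset.mp ht).1 hd with h | h
    · exact Or.inl h
    · exact Or.inr (Or.inl h)

lemma Bset_card_le (hcard : Fintype.card Q = n) {V : Finset (Finset Q)} (hV : IsForest V) :
    (Bset V).card ≤ n - 1 := by
  by_cases hne : (Bset V).Nonempty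
  · have := lam_bound (Bset V).card (Bset V) Finset.univ rfl
      (fun s hs => (mem_Bset.mp hs).2)
      (fun s hs t ht => Bset_lam hV hs ht)
      (fun s _ => Finset.subset_univ s) hne
    rw [Finset.card_univ, hcard] at this
    omega
  · rw [Finset.not_nonempty_iff_eq_empty] at hne
    simp [hne]

lemma idx_lt {V : Finset (Finset Q)} {s : Finset Q} (hs : s ∈ Bset V) :
    idx n V s < (Bset V).card := by
  apply Finset.card_lt_card
  constructor
  · exact Finset.filter_subset _ _
  · intro hsub
    have := hsub hs
    simp at this

lemma idx_inj (hcard : Fintype.card Q = n) {V : Finset (Finset Q)} {s t : Finset Q}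
    (hs : s ∈ Bset V) (ht : t ∈ Bset V) (h : idx n V s = idx n V t) : s = t := by
  by_contra hne
  have hfne : hfun n s ≠ hfun n t := fun hc => hne (hfun_inj hcard hc)
  rcases lt_or_gt_of_ne hfne with hlt | hlt
  · have : ((Bset V).filter fun u => hfun n u < hfun n s) ⊂
        ((Bset V).filter fun u => hfun n u < hfun n t) := by
      constructor
      · intro u hu
        have := Finset.mem_filter.mp hu
        exact Finset.mem_filter.mpr ⟨this.1, this.2.trans hlt⟩
      · intro hsub
        have := hsub (Finset.mem_filter.mpr ⟨hs, hlt⟩)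
        simp at this
    exact absurd h (by have := Finset.card_lt_card this; unfold idx; omega)
  · have : ((Bset V).filter fun u => hfun n u < hfun n t) ⊂
        ((Bset V).filter fun u => hfun n u < hfun n s) := by
      constructor
      · intro u hu
        have := Finset.mem_filter.mp hu
        exact Finset.mem_filter.mpr ⟨this.1, this.2.trans hlt⟩
      · intro hsub
        have := hsub (Finset.mem_filter.mpr ⟨ht, hlt⟩)
        simp at this
    exact absurd h (by have := Finset.card_lt_card this; unfold idx; omega)

lemma idx_surj (hcard : Fintype.card Q = n) {V : Finset (Finset Q)} {j : ℕ}
    (hj : j < (Bset V).card) : ∃ s ∈ Bset V, idx n V s = j := by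
  have hinj : Set.InjOn (idx n V) ↑(Bset V) := fun s hs t ht h => idx_inj hcard hs ht h
  have him : (Bset V).image (idx n V) = Finset.range (Bset V).card := by
    apply Finset.eq_of_subset_of_card_le
    · intro x hx
      obtain ⟨s, hs, rfl⟩ := Finset.mem_image.mp hx
      exact Finset.mem_range.mpr (idx_lt hs)
    · rw [Finset.card_range, Finset.card_image_of_injOn hinj]
  have : j ∈ (Bset V).image (idx n V) := him ▸ Finset.mem_range.mpr hj
  obtain ⟨s, hs, h⟩ := Finset.mem_image.mp this
  exact ⟨s, hs, h⟩

lemma card_max_of_idx_zero (hcard : Fintype.card Q = n) {V : Finset (Finset Q)} {s : Finset Q}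
    (h0 : idx n V s = 0) : ∀ u ∈ Bset V, u.card ≤ s.card := by
  intro u hu
  by_contra hlt
  have hmem : u ∈ (Bset V).filter fun u => hfun n u < hfun n s :=
    Finset.mem_filter.mpr ⟨hu, hfun_lt hcard (by omega)⟩
  unfold idx at h0
  rw [Finset.card_eq_zero] at h0
  rw [h0] at hmem
  simp at hmem

lemma SupS_empty_of_idx_zero (hcard : Fintype.card Q = n) {V : Finset (Finset Q)} {s : Finset Q}
    (h0 : idx n V s = 0) : SupS V s = ∅ := by
  rw [Finset.eq_empty_iff_forall_notMem]
  intro u hu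
  have hu' := Finset.mem_filter.mp hu
  have h1 := card_max_of_idx_zero hcard h0 u hu'.1
  exact absurd (Finset.card_lt_card hu'.2) (by omega)

lemma sig'_le {σ : Equiv.Perm (Fin (n - 2))} (k : ℕ) : sig' n σ k ≤ n - 3 := by
  unfold sig'
  split
  · have := (σ ⟨k, by assumption⟩).isLt
    omega
  · omega

lemma three_le_n (hcard : Fintype.card Q = n) {V : Finset (Finset Q)} (hV : IsForest V)
    {s : Finset Q} (hs : s ∈ Bset V) (h0 : idx n V s ≠ 0) : 3 ≤ n := by
  have h1 := idx_lt (n := n) hs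
  have h2 := Bset_card_le hcard hV
  omega

lemma lab_le (hcard : Fintype.card Q = n) {V : Finset (Finset Q)} (hV : IsForest V)
    {σ : Equiv.Perm (Fin (n - 2))} {s : Finset Q} (hs : s ∈ Bset V) :
    lab n V σ s ≤ n - 2 := by
  unfold lab
  split
  · omega
  · have h3 := three_le_n hcard hV hs (by assumption)
    have := sig'_le (n := n) (σ := σ) (idx n V s - 1)
    omega

lemma lab_eq_zero_iff {V : Finset (Finset Q)} {σ : Equiv.Perm (Fin (n - 2))} {s : Finset Q} :
    lab n V σ s = 0 ↔ idx n V s = 0 := by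
  unfold lab
  by_cases h : idx n V s = 0 <;> simp [h]

lemma lab_inj (hcard : Fintype.card Q = n) {V : Finset (Finset Q)} (hV : IsForest V)
    {σ : Equiv.Perm (Fin (n - 2))} {s t : Finset Q} (hs : s ∈ Bset V) (ht : t ∈ Bset V)
    (h : lab n V σ s = lab n V σ t) : s = t := by
  by_cases h1 : idx n V s = 0 <;> by_cases h2 : idx n V t = 0
  · exact idx_inj hcard hs ht (by omega)
  · rw [lab, if_pos h1, lab, if_neg h2] at h
    omega
  · rw [lab, if_neg h1, lab, if_pos h2] at h
    omega
  · rw [lab, if_neg h1, lab, if_neg h2] at h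
    have h3 := three_le_n hcard hV hs h1
    have hslt : idx n V s - 1 < n - 2 := by
      have := idx_lt (n := n) hs
      have := Bset_card_le hcard hV
      omega
    have htlt : idx n V t - 1 < n - 2 := by
      have := idx_lt (n := n) ht
      have := Bset_card_le hcard hV
      omega
    rw [sig', dif_pos hslt, sig', dif_pos htlt] at h
    have h4 : σ ⟨idx n V s - 1, hslt⟩ = σ ⟨idx n V t - 1, htlt⟩ :=
      Fin.val_injective (by omega)
    have h5 := σ.injective h4
    have h6 : idx n V s - 1 = idx n V t - 1 := by
      simpa [Fin.mk.injEq] using h5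
    exact idx_inj hcard hs ht (by omega)

lemma chain_amin {V : Finset (Finset Q)} (hV : IsForest V) {T : Finset (Finset Q)}
    (hTB : T ⊆ Bset V) (hch : ∀ u ∈ T, ∀ v ∈ T, ¬ Disjoint u v) (hT : T.Nonempty) :
    ∀ u ∈ T, amin T ⊆ u := by
  intro u hu
  have hm := amin_mem hT
  rcases Bset_lam hV (hTB hm) (hTB hu) with h | h | h
  · exact h
  · have he := Finset.eq_of_subset_of_card_le h (amin_min hT hu)
    rw [he]
  · exact absurd h (hch _ hm _ hu)

lemma Pset_min {V : Finset (Finset Q)} (hV : IsForest V) {q : Q} (hq : (Pset V q).Nonempty) :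
    ∀ u ∈ Pset V q, amin (Pset V q) ⊆ u := by
  refine chain_amin hV (Finset.filter_subset _ _) ?_ hq
  intro u hu v hv
  exact Finset.not_disjoint_iff.mpr ⟨q, (Finset.mem_filter.mp hu).2, (Finset.mem_filter.mp hv).2⟩

lemma SupS_min {V : Finset (Finset Q)} (hV : IsForest V) {s : Finset Q} (hsne : s.Nonempty)
    (hs : (SupS V s).Nonempty) : ∀ u ∈ SupS V s, amin (SupS V s) ⊆ u := by
  refine chain_amin hV (Finset.filter_subset _ _) ?_ hs
  intro u hu v hv
  obtain ⟨q, hq⟩ := hsne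
  exact Finset.not_disjoint_iff.mpr ⟨q, (Finset.mem_filter.mp hu).2.subset hq,
    (Finset.mem_filter.mp hv).2.subset hq⟩

def relE (n : ℕ) (V : Finset (Finset Q)) (σ : Equiv.Perm (Fin (n - 2))) (ℓ ℓ' : ℕ) : Prop :=
  ∃ s ∈ Bset V, lab n V σ s = ℓ ∧ (SupS V s).Nonempty ∧ lab n V σ (amin (SupS V s)) = ℓ'

lemma reach_of_mem (hcard : Fintype.card Q = n) {V : Finset (Finset Q)} (hV : IsForest V)
    {σ : Equiv.Perm (Fin (n - 2))} :
    ∀ (m : ℕ) (s : Finset Q), s ∈ Bset V → s.card ≤ m → ∀ q ∈ s,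
      Relation.ReflTransGen (relE n V σ) (lab n V σ (amin (Pset V q))) (lab n V σ s) := by
  intro m
  induction m with
  | zero =>
    intro s hs hm q hq
    have := (mem_Bset.mp hs).2
    omega
  | succ m ih =>
    intro s hs hm q hq
    have hq' : (Pset V q).Nonempty := ⟨s, Finset.mem_filter.mpr ⟨hs, hq⟩⟩
    have hPmem := Finset.mem_filter.mp (amin_mem hq')
    by_cases hPs : amin (Pset V q) = s
    · rw [hPs]
    · have hPsub : amin (Pset V q) ⊂ s :=
        Finset.ssubset_iff_subset_ne.mpr
          ⟨Pset_min hV hq' s (Finset.mem_filter.mpr ⟨hs, hq⟩), hPs⟩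
      set Cset := (Bset V).filter (fun u => q ∈ u ∧ u ⊂ s) with hCdef
      have hCne : Cset.Nonempty := ⟨amin (Pset V q),
        Finset.mem_filter.mpr ⟨hPmem.1, hPmem.2, hPsub⟩⟩
      set c := amax Cset with hcdef
      have hcmem := Finset.mem_filter.mp (amax_mem hCne)
      have hcB : c ∈ Bset V := hcmem.1
      have hqc : q ∈ c := hcmem.2.1
      have hcs : c ⊂ s := hcmem.2.2
      have hSne : (SupS V c).Nonempty := ⟨s, Finset.mem_filter.mpr ⟨hs, hcs⟩⟩
      have hcne : c.Nonempty := ⟨q, hqc⟩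
      have hpar : amin (SupS V c) = s := by
        have hmmem := Finset.mem_filter.mp (amin_mem hSne)
        have hms : amin (SupS V c) ⊆ s :=
          SupS_min hV hcne hSne s (Finset.mem_filter.mpr ⟨hs, hcs⟩)
        by_contra hne
        have hss : amin (SupS V c) ⊂ s := Finset.ssubset_iff_subset_ne.mpr ⟨hms, hne⟩
        have : amin (SupS V c) ∈ Cset := Finset.mem_filter.mpr
          ⟨hmmem.1, hmmem.2.subset hqc, hss⟩
        have h5 : (amin (SupS V c)).card ≤ c.card := amax_max hCne this
        have h6 : c.card < (amin (SupS V c)).card := Finset.card_lt_card hmmem.2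
        omega
      have hstep : relE n V σ (lab n V σ c) (lab n V σ s) :=
        ⟨c, hcB, rfl, hSne, by rw [hpar]⟩
      have hcard' : c.card ≤ m := by
        have := Finset.card_lt_card hcs
        omega
      exact Relation.ReflTransGen.tail (ih c hcB hcard' q hqc) hstep

lemma mem_of_reach (hcard : Fintype.card Q = n) {V : Finset (Finset Q)} (hV : IsForest V)
    {σ : Equiv.Perm (Fin (n - 2))} {q : Q} {ℓ : ℕ} (hq : (Pset V q).Nonempty)
    (h : Relation.ReflTransGen (relE n V σ) (lab n V σ (amin (Pset V q))) ℓ) :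
    ∃ u ∈ Bset V, lab n V σ u = ℓ ∧ q ∈ u := by
  induction h with
  | refl =>
    have hPmem := Finset.mem_filter.mp (amin_mem hq)
    exact ⟨amin (Pset V q), hPmem.1, rfl, hPmem.2⟩
  | tail hab hrel ih =>
    obtain ⟨u, huB, hulab, hqu⟩ := ih
    obtain ⟨s1, hs1B, hs1lab, hSne, hparlab⟩ := hrel
    have heq : s1 = u := lab_inj hcard hV hs1B huB (hs1lab.trans hulab.symm)
    subst heq
    have hpmem := Finset.mem_filter.mp (amin_mem hSne)
    exact ⟨amin (SupS V s1), hpmem.1, hparlab, hpmem.2.subset hqu⟩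

lemma iq_ne_iff (hcard : Fintype.card Q = n) {V : Finset (Finset Q)} (hV : IsForest V)
    (hn : 2 ≤ n) {σ : Equiv.Perm (Fin (n - 2))} (q : Q) :
    iqf n V σ q ≠ n - 1 ↔ (Pset V q).Nonempty := by
  constructor
  · intro h
    by_contra hq
    rw [iqf, if_neg hq] at h
    exact h rfl
  · intro hq
    rw [iqf, if_pos hq]
    have h5 : lab n V σ (amin (Pset V q)) ≤ n - 2 :=
      lab_le hcard hV (Finset.mem_filter.mp (amin_mem hq)).1
    omega

lemma mem_iff_reach (hcard : Fintype.card Q = n) {V : Finset (Finset Q)} (hV : IsForest V)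
    (hn : 2 ≤ n) {σ : Equiv.Perm (Fin (n - 2))} {s : Finset Q} (hs : s ∈ Bset V) (q : Q) :
    q ∈ s ↔ (iqf n V σ q ≠ n - 1 ∧
      Relation.ReflTransGen (relE n V σ) (iqf n V σ q) (lab n V σ s)) := by
  constructor
  · intro hqs
    have hq : (Pset V q).Nonempty := ⟨s, Finset.mem_filter.mpr ⟨hs, hqs⟩⟩
    refine ⟨(iq_ne_iff hcard hV hn q).mpr hq, ?_⟩
    rw [iqf, if_pos hq]
    exact reach_of_mem hcard hV s.card s hs le_rfl q hqs
  · rintro ⟨hne, hr⟩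
    have hq : (Pset V q).Nonempty := (iq_ne_iff hcard hV hn q).mp hne
    rw [iqf, if_pos hq] at hr
    obtain ⟨u, huB, hulab, hqu⟩ := mem_of_reach hcard hV hq hr
    rwa [lab_inj hcard hV huB hs hulab] at hqu

lemma raw_elem {V : Finset (Finset Q)} {σ : Equiv.Perm (Fin (n - 2))} (eqv : Q ≃ Fin n)
    (q : Q) : raw n eqv V σ ((eqv q : Fin n) : ℕ) = (decide ({q} ∈ V), iqf n V σ q) := by
  have hp : ((eqv q : Fin n) : ℕ) < n := (eqv q).isLt
  have h2 : eqv.symm ⟨((eqv q : Fin n) : ℕ), hp⟩ = q := by simp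
  rw [raw, dif_pos hp, h2]

lemma rel_iff_raw (hcard : Fintype.card Q = n) {V : Finset (Finset Q)} (hV : IsForest V)
    (hn : 2 ≤ n) (eqv : Q ≃ Fin n) {σ : Equiv.Perm (Fin (n - 2))} (ℓ ℓ' : ℕ) :
    relE n V σ ℓ ℓ' ↔ (1 ≤ ℓ ∧ ℓ ≤ n - 2 ∧
      raw n eqv V σ (n + ℓ - 1) = (false, ℓ') ∧ ℓ' ≠ n - 1) := by
  constructor
  · rintro ⟨s, hsB, hslab, hSne, hpar⟩
    have hℓ1 : 1 ≤ ℓ := by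
      rcases Nat.eq_zero_or_pos ℓ with h0 | h
      · exfalso
        rw [h0] at hslab
        have h5 := SupS_empty_of_idx_zero hcard (V := V) (s := s) (lab_eq_zero_iff.mp hslab)
        rw [h5] at hSne
        exact Finset.not_nonempty_empty hSne
      · exact h
    have hℓ2 : ℓ ≤ n - 2 := by
      rw [← hslab]
      exact lab_le hcard hV hsB
    have hpn : ¬ (n + ℓ - 1 < n) := by omega
    have hℓeq : n + ℓ - 1 - n + 1 = ℓ := by omega
    have hA : (Aset n V σ ℓ).Nonempty := ⟨s, Finset.mem_filter.mpr ⟨hsB, hslab⟩⟩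
    have hamem := Finset.mem_filter.mp (amin_mem hA)
    have hamin : amin (Aset n V σ ℓ) = s :=
      lab_inj hcard hV hamem.1 hsB (hamem.2.trans hslab.symm)
    refine ⟨hℓ1, hℓ2, ?_, ?_⟩
    · rw [raw, dif_neg hpn, hℓeq, if_pos hA, hamin, parL, if_pos hSne, hpar]
    · have h9 : lab n V σ (amin (SupS V s)) ≤ n - 2 :=
        lab_le hcard hV (Finset.mem_filter.mp (amin_mem hSne)).1
      have hpar' : lab n V σ (amin (SupS V s)) = ℓ' := hpar
      omega
  · rintro ⟨h1, h2, h3, h4⟩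
    have hpn : ¬ (n + ℓ - 1 < n) := by omega
    have hℓeq : n + ℓ - 1 - n + 1 = ℓ := by omega
    rw [raw, dif_neg hpn, hℓeq] at h3
    by_cases hA : (Aset n V σ ℓ).Nonempty
    · rw [if_pos hA] at h3
      have hamem := Finset.mem_filter.mp (amin_mem hA)
      have hℓ' : parL n V σ (amin (Aset n V σ ℓ)) = ℓ' := congrArg Prod.snd h3
      have hSne : (SupS V (amin (Aset n V σ ℓ))).Nonempty := by
        by_contra h
        rw [parL, if_neg h] at hℓ'
        exact h4 hℓ'.symm
      rw [parL, if_pos hSne] at hℓ'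
      exact ⟨amin (Aset n V σ ℓ), hamem.1, hamem.2, hSne, hℓ'⟩
    · rw [if_neg hA] at h3
      have := congrArg Prod.fst h3
      simp at this

lemma flag_false_iff (eqv : Q ≃ Fin n) {V : Finset (Finset Q)} {σ : Equiv.Perm (Fin (n - 2))}
    {j : ℕ} (h1 : 1 ≤ j) :
    (raw n eqv V σ (n + j - 1)).1 = false ↔ (Aset n V σ j).Nonempty := by
  have hpn : ¬ (n + j - 1 < n) := by omega
  have hje : n + j - 1 - n + 1 = j := by omega
  rw [raw, dif_neg hpn, hje]
  by_cases hA : (Aset n V σ j).Nonempty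
  · simp [if_pos hA, hA]
  · simp [if_neg hA, hA]

lemma transfer (hcard : Fintype.card Q = n) (hn : 2 ≤ n) (eqv : Q ≃ Fin n)
    {V W : Finset (Finset Q)} (hV : IsForest V) (hW : IsForest W)
    {σ τ : Equiv.Perm (Fin (n - 2))}
    (E : ∀ p < 2 * n - 2, raw n eqv V σ p = raw n eqv W τ p) :
    ∀ s ∈ Bset V, ∃ s' ∈ Bset W, lab n W τ s' = lab n V σ s ∧ s = s' := by
  have Eiq : ∀ q : Q, iqf n V σ q = iqf n W τ q := by
    intro q
    have hE := E ((eqv q : Fin n) : ℕ) (by have := (eqv q).isLt; omega)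
    rw [raw_elem eqv q, raw_elem eqv q] at hE
    exact congrArg Prod.snd hE
  have Eflag : ∀ j, 1 ≤ j → j ≤ n - 2 →
      ((Aset n V σ j).Nonempty ↔ (Aset n W τ j).Nonempty) := by
    intro j h1 h2
    rw [← flag_false_iff eqv h1, ← flag_false_iff eqv h1, E (n + j - 1) (by omega)]
  have Erel : ∀ a b, relE n V σ a b ↔ relE n W τ a b := by
    intro a b
    constructor
    · intro h
      obtain ⟨h1, h2, h3, h4⟩ := (rel_iff_raw hcard hV hn eqv a b).mp h
      exact (rel_iff_raw hcard hW hn eqv a b).mpr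
        ⟨h1, h2, by rw [← E (n + a - 1) (by omega)]; exact h3, h4⟩
    · intro h
      obtain ⟨h1, h2, h3, h4⟩ := (rel_iff_raw hcard hW hn eqv a b).mp h
      exact (rel_iff_raw hcard hV hn eqv a b).mpr
        ⟨h1, h2, by rw [E (n + a - 1) (by omega)]; exact h3, h4⟩
  intro s hs
  have hex : ∃ s' ∈ Bset W, lab n W τ s' = lab n V σ s := by
    rcases Nat.eq_zero_or_pos (lab n V σ s) with h0 | h1
    · obtain ⟨q, hq⟩ : s.Nonempty := Finset.card_pos.mp (by have := (mem_Bset.mp hs).2; omega)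
      have hq1 : (Pset V q).Nonempty := ⟨s, Finset.mem_filter.mpr ⟨hs, hq⟩⟩
      have hq2 : iqf n W τ q ≠ n - 1 := by
        rw [← Eiq q]
        exact (iq_ne_iff hcard hV hn q).mpr hq1
      have hq3 : (Pset W q).Nonempty := (iq_ne_iff hcard hW hn q).mp hq2
      obtain ⟨u, hu⟩ := hq3
      have hbW : 0 < (Bset W).card := Finset.card_pos.mpr ⟨u, (Finset.mem_filter.mp hu).1⟩
      obtain ⟨s', hs', hidx⟩ := idx_surj hcard hbW
      refine ⟨s', hs', ?_⟩
      rw [lab, if_pos hidx, h0]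
    · have hA : (Aset n V σ (lab n V σ s)).Nonempty := ⟨s, Finset.mem_filter.mpr ⟨hs, rfl⟩⟩
      have h2 := lab_le hcard hV hs (σ := σ)
      have hAW : (Aset n W τ (lab n V σ s)).Nonempty := (Eflag _ h1 h2).mp hA
      obtain ⟨s', hs'⟩ := hAW
      have hmem := Finset.mem_filter.mp hs'
      exact ⟨s', hmem.1, hmem.2⟩
  obtain ⟨s', hs'B, hs'lab⟩ := hex
  refine ⟨s', hs'B, hs'lab, Finset.ext fun q => ?_⟩
  rw [mem_iff_reach hcard hV hn hs q, mem_iff_reach hcard hW hn hs'B q, hs'lab, Eiq q]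
  constructor
  · rintro ⟨a1, a2⟩
    exact ⟨a1, Relation.ReflTransGen.mono (fun a b hab => (Erel a b).mp hab) _ _ a2⟩
  · rintro ⟨a1, a2⟩
    exact ⟨a1, Relation.ReflTransGen.mono (fun a b hab => (Erel a b).mpr hab) _ _ a2⟩

lemma unassigned_card (hcard : Fintype.card Q = n) (hn : 2 ≤ n) {V : Finset (Finset Q)}
    (hV : IsForest V) {σ : Equiv.Perm (Fin (n - 2))} :
    ((Finset.Ico 1 (n - 1)).filter (fun j => Aset n V σ j = ∅)).card =
      (n - 2) - ((Bset V).card - 1) := by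
  have hsplit : ((Finset.Ico 1 (n - 1)).filter (fun j => Aset n V σ j = ∅)).card +
      ((Finset.Ico 1 (n - 1)).filter (fun j => ¬ Aset n V σ j = ∅)).card =
      (Finset.Ico 1 (n - 1)).card :=
    Finset.card_filter_add_card_filter_not _
  have hIco : (Finset.Ico 1 (n - 1)).card = n - 2 := by
    rw [Nat.card_Ico]
    omega
  have hA : (Finset.Ico 1 (n - 1)).filter (fun j => ¬ Aset n V σ j = ∅) =
      ((Bset V).filter (fun s => ¬ idx n V s = 0)).image (lab n V σ) := by
    ext j
    constructor
    · intro hj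
      have hj' := Finset.mem_filter.mp hj
      have hjI := Finset.mem_Ico.mp hj'.1
      obtain ⟨s, hsmem⟩ := Finset.nonempty_iff_ne_empty.mpr hj'.2
      have hs' := Finset.mem_filter.mp hsmem
      refine Finset.mem_image.mpr ⟨s, Finset.mem_filter.mpr ⟨hs'.1, ?_⟩, hs'.2⟩
      intro h0
      have hz : lab n V σ s = 0 := lab_eq_zero_iff.mpr h0
      omega
    · intro hj
      obtain ⟨s, hsm, rfl⟩ := Finset.mem_image.mp hj
      have hsm' := Finset.mem_filter.mp hsm
      have hlle := lab_le hcard hV hsm'.1 (σ := σ)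
      have hlne : lab n V σ s ≠ 0 := fun hc => hsm'.2 (lab_eq_zero_iff.mp hc)
      refine Finset.mem_filter.mpr ⟨Finset.mem_Ico.mpr ⟨by omega, by omega⟩, ?_⟩
      exact Finset.nonempty_iff_ne_empty.mp ⟨s, Finset.mem_filter.mpr ⟨hsm'.1, rfl⟩⟩
  have hinj : Set.InjOn (lab n V σ) ↑((Bset V).filter (fun s => ¬ idx n V s = 0)) :=
    fun s hsm t htm h =>
      lab_inj hcard hV (Finset.mem_filter.mp hsm).1 (Finset.mem_filter.mp htm).1 h
  have hfc : ((Bset V).filter (fun s => ¬ idx n V s = 0)).card = (Bset V).card - 1 := by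
    have hsplit2 : ((Bset V).filter (fun s => idx n V s = 0)).card +
        ((Bset V).filter (fun s => ¬ idx n V s = 0)).card = (Bset V).card :=
      Finset.card_filter_add_card_filter_not _
    by_cases hb : (Bset V).card = 0
    · have hBe : Bset V = ∅ := Finset.card_eq_zero.mp hb
      rw [hBe]
      simp [hb]
    · obtain ⟨s0, hs0, hidx0⟩ := idx_surj (V := V) hcard (j := 0) (by omega)
      have hone : (Bset V).filter (fun s => idx n V s = 0) = {s0} := by
        ext u
        constructor
        · intro hu
          have hu' := Finset.mem_filter.mp hu
          rw [Finset.mem_singleton]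
          exact idx_inj hcard hu'.1 hs0 (by omega)
        · intro hu
          rw [Finset.mem_singleton] at hu
          rw [hu]
          exact Finset.mem_filter.mpr ⟨hs0, hidx0⟩
      rw [hone] at hsplit2
      simp only [Finset.card_singleton] at hsplit2
      omega
  rw [hA] at hsplit
  rw [Finset.card_image_of_injOn hinj] at hsplit
  rw [hfc] at hsplit
  rw [hIco] at hsplit
  omega

lemma raw_inj (hcard : Fintype.card Q = n) (hn : 2 ≤ n) (eqv : Q ≃ Fin n)
    {V W : Finset (Finset Q)} (hV : IsForest V) (hW : IsForest W)
    {σ τ : Equiv.Perm (Fin (n - 2))}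
    (E : ∀ p < 2 * n - 2, raw n eqv V σ p = raw n eqv W τ p) : V = W ∧ σ = τ := by
  have E' : ∀ p < 2 * n - 2, raw n eqv W τ p = raw n eqv V σ p := fun p hp => (E p hp).symm
  have hB : Bset V = Bset W := by
    apply Finset.Subset.antisymm
    · intro s hs
      obtain ⟨s', h1, h2, h3⟩ := transfer hcard hn eqv hV hW E s hs
      rw [h3]
      exact h1
    · intro s hs
      obtain ⟨s', h1, h2, h3⟩ := transfer hcard hn eqv hW hV E' s hs
      rw [h3]
      exact h1
  have hsing : ∀ q : Q, ({q} ∈ V ↔ {q} ∈ W) := by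
    intro q
    have hE := E ((eqv q : Fin n) : ℕ) (by have := (eqv q).isLt; omega)
    rw [raw_elem eqv q, raw_elem eqv q] at hE
    have hfst := congrArg Prod.fst hE
    simpa using hfst
  have hVW : V = W := by
    ext s
    constructor
    · intro hsV
      have hne := hV.1 s hsV
      have hc := Finset.card_pos.mpr hne
      by_cases h2 : 2 ≤ s.card
      · have hmem : s ∈ Bset W := hB ▸ mem_Bset.mpr ⟨hsV, h2⟩
        exact (mem_Bset.mp hmem).1
      · have h1 : s.card = 1 := by omega
        obtain ⟨q, rfl⟩ := Finset.card_eq_one.mp h1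
        exact (hsing q).mp hsV
    · intro hsW
      have hne := hW.1 s hsW
      have hc := Finset.card_pos.mpr hne
      by_cases h2 : 2 ≤ s.card
      · have hmem : s ∈ Bset V := hB.symm ▸ mem_Bset.mpr ⟨hsW, h2⟩
        exact (mem_Bset.mp hmem).1
      · have h1 : s.card = 1 := by omega
        obtain ⟨q, rfl⟩ := Finset.card_eq_one.mp h1
        exact (hsing q).mpr hsW
  refine ⟨hVW, ?_⟩
  subst hVW
  have hlabeq : ∀ s ∈ Bset V, lab n V σ s = lab n V τ s := by
    intro s hs
    obtain ⟨s', h1, h2, h3⟩ := transfer hcard hn eqv hV hV E s hs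
    rw [← h3] at h2
    exact h2.symm
  have Eflag : ∀ j, 1 ≤ j → j ≤ n - 2 →
      ((Aset n V σ j).Nonempty ↔ (Aset n V τ j).Nonempty) := by
    intro j h1 h2
    rw [← flag_false_iff eqv h1, ← flag_false_iff eqv h1, E (n + j - 1) (by omega)]
  apply Equiv.ext
  intro k
  have hk := k.isLt
  by_cases hkd : (k : ℕ) < (Bset V).card - 1
  · obtain ⟨s, hsB, hidx⟩ := idx_surj (V := V) hcard (j := (k : ℕ) + 1) (by omega)
    have e1 : lab n V σ s = sig' n σ (k : ℕ) + 1 := by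
      rw [lab, if_neg (by omega)]
      have hia : idx n V s - 1 = (k : ℕ) := by omega
      rw [hia]
    have e2 : lab n V τ s = sig' n τ (k : ℕ) + 1 := by
      rw [lab, if_neg (by omega)]
      have hia : idx n V s - 1 = (k : ℕ) := by omega
      rw [hia]
    have h4 := hlabeq s hsB
    rw [e1, e2] at h4
    have h5 : sig' n σ (k : ℕ) = sig' n τ (k : ℕ) := by omega
    rw [sig', dif_pos hk, sig', dif_pos hk] at h5
    exact Fin.ext h5
  · have hble := Bset_card_le hcard hV
    have hTcard := unassigned_card (V := V) (σ := σ) hcard hn hV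
    have hm : (k : ℕ) - ((Bset V).card - 1) <
        ((Finset.Ico 1 (n - 1)).filter (fun j => Aset n V σ j = ∅)).card := by
      rw [hTcard]
      omega
    obtain ⟨ℓ, hℓT, hrank⟩ := rank_exists _ _ hm
    have hℓprops := Finset.mem_filter.mp hℓT
    have hℓIco := Finset.mem_Ico.mp hℓprops.1
    have hp2 : n + ℓ - 1 < 2 * n - 2 := by omega
    have hpn : ¬ (n + ℓ - 1 < n) := by omega
    have hℓe : n + ℓ - 1 - n + 1 = ℓ := by omega
    have hAσ : ¬ (Aset n V σ ℓ).Nonempty := by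
      rw [hℓprops.2]
      exact Finset.not_nonempty_empty
    have hAτ : ¬ (Aset n V τ ℓ).Nonempty := by
      intro hcon
      have hEp := E (n + ℓ - 1) hp2
      rw [raw, dif_neg hpn, hℓe, if_neg hAσ, raw, dif_neg hpn, hℓe, if_pos hcon] at hEp
      simpa using congrArg Prod.fst hEp
    have hspcσ : spc n V σ ℓ = (k : ℕ) - ((Bset V).card - 1) := by
      rw [← hrank]
      unfold spc
      congr 1
      ext j
      simp only [Finset.mem_filter, Finset.mem_Ico]
      constructor
      · rintro ⟨⟨hj1, hj2⟩, hj3⟩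
        exact ⟨⟨⟨hj1, by omega⟩, hj3⟩, hj2⟩
      · rintro ⟨⟨⟨hj1, hj2⟩, hj3⟩, hj4⟩
        exact ⟨⟨hj1, hj4⟩, hj3⟩
    have hspceq : spc n V σ ℓ = spc n V τ ℓ := by
      unfold spc
      congr 1
      apply Finset.filter_congr
      intro j hj
      have hjI := Finset.mem_Ico.mp hj
      have hflag := Eflag j hjI.1 (by omega)
      rw [← Finset.not_nonempty_iff_eq_empty, ← Finset.not_nonempty_iff_eq_empty]
      exact not_congr hflag
    have hEp := E (n + ℓ - 1) hp2
    rw [raw, dif_neg hpn, hℓe, if_neg hAσ, raw, dif_neg hpn, hℓe, if_neg hAτ] at hEp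
    have hsnd := congrArg Prod.snd hEp
    simp only at hsnd
    rw [← hspceq, hspcσ] at hsnd
    have harg : (Bset V).card - 1 + ((k : ℕ) - ((Bset V).card - 1)) = (k : ℕ) := by omega
    rw [harg] at hsnd
    rw [sig', dif_pos hk, sig', dif_pos hk] at hsnd
    exact Fin.ext hsnd

lemma lab_lt_n (hn : 2 ≤ n) {V : Finset (Finset Q)} {σ : Equiv.Perm (Fin (n - 2))}
    (s : Finset Q) : lab n V σ s < n := by
  rw [lab]
  split
  · omega
  · have := sig'_le (n := n) (σ := σ) (idx n V s - 1)
    omega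

lemma raw_snd_lt (hn : 2 ≤ n) (eqv : Q ≃ Fin n) (V : Finset (Finset Q))
    (σ : Equiv.Perm (Fin (n - 2))) (p : ℕ) : (raw n eqv V σ p).2 < n := by
  rw [raw]
  split
  · dsimp only
    rw [iqf]
    split
    · exact lab_lt_n hn _
    · omega
  · split
    · dsimp only
      rw [parL]
      split
      · exact lab_lt_n hn _
      · omega
    · dsimp only
      have := sig'_le (n := n) (σ := σ) ((Bset V).card - 1 + spc n V σ (p - n + 1))
      omega

end Encoding


/-- The number of rooted forests over a finite set `Q` of size `n ≥ 2` is at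
most `(2n)^(2n-2) / (n-2)!`. -/
theorem card_forests_le {Q : Type*} [Fintype Q] [DecidableEq Q] (n : ℕ)
    (hn : 2 ≤ n) (hcard : Fintype.card Q = n) :
    Nat.card {V : Finset (Finset Q) // IsForest V} ≤
      (2 * n) ^ (2 * n - 2) / Nat.factorial (n - 2) := by
  have eqv : Q ≃ Fin n := Fintype.equivFinOfCardEq hcard
  rw [Nat.le_div_iff_mul_le (Nat.factorial_pos (n - 2))]
  have hperm : Nat.card (Equiv.Perm (Fin (n - 2))) = Nat.factorial (n - 2) := by
    rw [Nat.card_eq_fintype_card, Fintype.card_perm, Fintype.card_fin]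
  rw [← hperm, ← Nat.card_prod]
  set f : {V : Finset (Finset Q) // IsForest V} × Equiv.Perm (Fin (n - 2)) →
      (Fin (2 * n - 2) → Bool × Fin n) :=
    fun x p => ((raw n eqv x.1.1 x.2 (p : ℕ)).1,
      ⟨(raw n eqv x.1.1 x.2 (p : ℕ)).2, raw_snd_lt hn eqv x.1.1 x.2 (p : ℕ)⟩) with hf
  have hfinj : Function.Injective f := by
    intro x y hxy
    have E : ∀ p < 2 * n - 2, raw n eqv x.1.1 x.2 p = raw n eqv y.1.1 y.2 p := by
      intro p hp
      have h1 := congrFun hxy (⟨p, hp⟩ : Fin (2 * n - 2))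
      rw [hf] at h1
      dsimp only at h1
      have hfst : (raw n eqv x.1.1 x.2 p).1 = (raw n eqv y.1.1 y.2 p).1 := by
        have h2 := congrArg Prod.fst h1
        simpa using h2
      have hsnd : (raw n eqv x.1.1 x.2 p).2 = (raw n eqv y.1.1 y.2 p).2 := by
        have h2 := congrArg (fun z : Bool × Fin n => ((z.2 : Fin n) : ℕ)) h1
        simpa using h2
      exact Prod.ext hfst hsnd
    obtain ⟨hVW, hστ⟩ := raw_inj hcard hn eqv x.1.2 y.1.2 E
    exact Prod.ext (Subtype.ext hVW) hστ
  have hle := Nat.card_le_card_of_injective f hfinj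
  have htarget : Nat.card (Fin (2 * n - 2) → Bool × Fin n) = (2 * n) ^ (2 * n - 2) := by
    rw [Nat.card_eq_fintype_card, Fintype.card_fun, Fintype.card_prod, Fintype.card_fin,
      Fintype.card_bool, Fintype.card_fin]
  rw [htarget] at hle
  exact hle
end

section
/- The substitution transition monoid of an SST surjects onto its flow transition monoid: the map sending f_u (the function p ↦ (q, σ̃_r) recording the target state and the variable-flow substitution of the run r over u from p) to the flow matrix m_u is a surjective monoid homomorphism; hence the flow transition monoid divides the substitution transition monoid, and aperiodicity of the substitution transition monoid implies aperiodicity of the flow transition monoid. -/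
/-- A deterministic streaming string transducer (transition structure). -/
structure SST (A B Q X : Type*) where
  delta : Q → A → Q
  rho : Q → A → X → List (B ⊕ X)

/-- Homomorphic extension of a substitution to words over `B ∪ X`. -/
def applyS {X B : Type*} (σ : X → List (B ⊕ X)) (w : List (B ⊕ X)) :
    List (B ⊕ X) :=
  w.flatMap (Sum.elim (fun b => [Sum.inl b]) σ)

/-- Composition of substitutions: `(σ₁σ₂)(x) = σ̂₁(σ₂ x)`. -/
def compS {X B : Type*} (σ₁ σ₂ : X → List (B ⊕ X)) : X → List (B ⊕ X) :=
  fun x => applyS σ₁ (σ₂ x)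

/-- The run of an SST from state `p` over word `u`: final state together with
the induced substitution. -/
def SST.run {A B Q X : Type*} (T : SST A B Q X) (p : Q) (u : List A) :
    Q × (X → List (B ⊕ X)) :=
  u.foldl (fun s a => (T.delta s.1 a, compS s.2 (T.rho s.1 a)))
    (p, fun x => [Sum.inr x])

/-- The `n`-th power `u^n` of a word. -/
def wpow {A : Type*} (u : List A) (n : ℕ) : List A :=
  (List.replicate n u).flatten

private lemma count_filterMap_getRight? {B X : Type*} [DecidableEq B] [DecidableEq X]
    (l : List (B ⊕ X)) (x : X) :
    (l.filterMap Sum.getRight?).count x = l.count (Sum.inr x) := by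
  induction l with
  | nil => rfl
  | cons a t ih =>
    cases a with
    | inl b =>
      simp only [List.filterMap_cons, Sum.getRight?, List.count_cons, ih]
      norm_num
      rfl
    | inr y =>
      simp only [List.filterMap_cons, Sum.getRight?, List.count_cons, ih]
      have h : ((Sum.inr y : B ⊕ X) == Sum.inr x) = (y == x) := rfl
      rw [h]

/-- The substitution transition monoid surjects onto the flow transition
monoid: the map `f_u ↦ m_u` is well defined (the element of the substitution
transition monoid determines the flow matrix), so the flow transition monoid
divides the substitution transition monoid; consequently, aperiodicity of the
substitution transition monoid implies aperiodicity of the flow transition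
monoid. -/
theorem stm_surjects_onto_ftm {A B Q X : Type*}
    [Fintype Q] [Fintype X] [DecidableEq Q] [DecidableEq X] [DecidableEq B]
    (T : SST A B Q X)
    (stm : List A → Q → Q × (X → List X))
    (hstm : ∀ u p, stm u p =
      ((T.run p u).1, fun y => ((T.run p u).2 y).filterMap Sum.getRight?))
    (flowMat : List A → (Q × X) → (Q × X) → Option ℕ)
    (hflow : ∀ u p x q y, flowMat u (p, x) (q, y) =
      if (T.run p u).1 = q then some (((T.run p u).2 y).count (Sum.inr x))
      else none) :
    (∀ u v : List A, stm u = stm v → flowMat u = flowMat v) ∧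
    ((∃ n : ℕ, ∀ u : List A, stm (wpow u n) = stm (wpow u (n + 1))) →
      ∃ n : ℕ, ∀ u : List A, flowMat (wpow u n) = flowMat (wpow u (n + 1))) := by
  have key : ∀ u v : List A, stm u = stm v → flowMat u = flowMat v := by
    intro u v h
    funext px qy
    obtain ⟨p, x⟩ := px
    obtain ⟨q, y⟩ := qy
    have hp : stm u p = stm v p := by rw [h]
    rw [hstm, hstm] at hp
    obtain ⟨h1, h2'⟩ := Prod.mk.inj hp
    have h2 : ((T.run p u).2 y).filterMap Sum.getRight?
        = ((T.run p v).2 y).filterMap Sum.getRight? := congrFun h2' y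
    have h3 : ((T.run p u).2 y).count (Sum.inr x)
        = ((T.run p v).2 y).count (Sum.inr x) := by
      rw [← count_filterMap_getRight?, ← count_filterMap_getRight?, h2]
    rw [hflow, hflow, h1, h3]
  exact ⟨key, fun ⟨n, hn⟩ => ⟨n, fun u => key _ _ (hn u)⟩⟩
end
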